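/- arXiv:2503.18449 — 7 statements merged into one kernel-verified Lean document; each statement's English description precedes it below -/
import Mathlib

section
/- Let k be a field of characteristic 0, V a finite-dimensional k-vector space and φ : V → V a linear endomorphism. Then in the ring of formal power series k[[T]] one has exp(∑_{n≥1} (tr(φ^n)/n)·T^n) = (det(1 − T·φ))^{-1}, where det(1 − T·φ) denotes the reverse characteristic polynomial of φ, regarded as an element of k[[T]]. -/
open PowerSeries

/-- The exponential of a formal power series (with zero constant term) over a field of
characteristic zero, defined coefficientwise: the `n`-th coefficient of `exp f` is
`∑_{m ≤ n} coeff n (f^m) / m!` (for `f` of positive order only the terms `m ≤ n` contribute). -/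
noncomputable def psExp (k : Type) [Field k] (f : PowerSeries k) : PowerSeries k :=
  PowerSeries.mk fun n =>
    ∑ m ∈ Finset.range (n + 1), ((Nat.factorial m : k))⁻¹ * PowerSeries.coeff (R := k) n (f ^ m)

section Aux
open Finset Matrix
set_option linter.unusedSectionVars false

variable {k : Type} [Field k] {ι : Type} [Fintype ι] [DecidableEq ι]

variable {k : Type} [Field k]


lemma coeff_pow_eq_zero {g : PowerSeries k} (hg : constantCoeff (R := k) g = 0) {n m : ℕ}
    (h : n < m) : coeff (R := k) n (g ^ m) = 0 := by
  have hd : (X : PowerSeries k) ^ m ∣ g ^ m :=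
    pow_dvd_pow_of_dvd (X_dvd_iff.mpr hg) m
  exact (X_pow_dvd_iff.mp hd) n h

lemma coeff_mul_congr {f h₁ h₂ : PowerSeries k} {n : ℕ}
    (h : ∀ q ≤ n, coeff (R := k) q h₁ = coeff (R := k) q h₂) :
    coeff (R := k) n (f * h₁) = coeff (R := k) n (f * h₂) := by
  rw [coeff_mul, coeff_mul]
  apply Finset.sum_congr rfl
  intro p hp
  rw [Finset.HasAntidiagonal.mem_antidiagonal] at hp
  rw [h p.2 (by omega)]

lemma coeff_psExp (g : PowerSeries k) (n : ℕ) :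
    coeff (R := k) n (psExp k g) =
      ∑ m ∈ Finset.range (n + 1), ((Nat.factorial m : k))⁻¹ * coeff (R := k) n (g ^ m) := by
  rw [psExp, coeff_mk]

lemma constantCoeff_psExp (g : PowerSeries k) : constantCoeff (R := k) (psExp k g) = 1 := by
  rw [← coeff_zero_eq_constantCoeff_apply, coeff_psExp]
  simp

lemma psExp_deriv [CharZero k] {g : PowerSeries k} (hg : constantCoeff (R := k) g = 0) :
    d⁄dX k (psExp k g) = d⁄dX k g * psExp k g := by
  ext n
  set T : PowerSeries k :=
    ∑ m ∈ Finset.range (n + 1), C (R := k) ((Nat.factorial m : k))⁻¹ * g ^ m with hT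
  have hagree : ∀ q ≤ n, coeff (R := k) q (psExp k g) = coeff (R := k) q T := by
    intro q hq
    rw [coeff_psExp, hT, map_sum]
    rw [← Finset.sum_subset (Finset.range_subset_range.mpr (by omega : q + 1 ≤ n + 1))
      (fun m hm hm' => by
        rw [Finset.mem_range] at hm hm'
        rw [coeff_C_mul, coeff_pow_eq_zero hg (by omega), mul_zero])]
    apply Finset.sum_congr rfl
    intro m _
    rw [coeff_C_mul]
  have hstep : ∀ m : ℕ, coeff (R := k) n (d⁄dX k g * g ^ m)
      = ((m : k) + 1)⁻¹ * (coeff (R := k) (n + 1) (g ^ (m + 1)) * ((n : k) + 1)) := by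
    intro m
    have hd := congrArg (coeff (R := k) n) (Derivation.leibniz_pow (d⁄dX k) g (m + 1))
    rw [coeff_derivative, Nat.add_sub_cancel, map_nsmul, smul_eq_mul, nsmul_eq_mul] at hd
    have hm1 : ((m : k) + 1) ≠ 0 := by
      exact_mod_cast (Nat.cast_ne_zero (R := k)).mpr (Nat.succ_ne_zero m)
    rw [mul_comm (d⁄dX k g) (g ^ m), hd]
    push_cast
    rw [← mul_assoc, inv_mul_cancel₀ hm1, one_mul]
  calc coeff (R := k) n (d⁄dX k (psExp k g))
      = (∑ m ∈ Finset.range (n + 2), ((Nat.factorial m : k))⁻¹ * coeff (R := k) (n + 1) (g ^ m))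
          * ((n : k) + 1) := by
        rw [coeff_derivative, coeff_psExp]
    _ = ∑ m ∈ Finset.range (n + 2),
          ((Nat.factorial m : k))⁻¹ * coeff (R := k) (n + 1) (g ^ m) * ((n : k) + 1) := by
        rw [Finset.sum_mul]
    _ = ∑ m ∈ Finset.range (n + 1),
          ((Nat.factorial (m + 1) : k))⁻¹ * coeff (R := k) (n + 1) (g ^ (m + 1)) * ((n : k) + 1) := by
        rw [Finset.sum_range_succ']
        simp
    _ = ∑ m ∈ Finset.range (n + 1),
          ((Nat.factorial m : k))⁻¹ * coeff (R := k) n (d⁄dX k g * g ^ m) := by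
        apply Finset.sum_congr rfl
        intro m _
        rw [hstep m, Nat.factorial_succ]
        push_cast
        rw [mul_inv]
        ring
    _ = coeff (R := k) n (d⁄dX k g * T) := by
        rw [hT, Finset.mul_sum, map_sum]
        apply Finset.sum_congr rfl
        intro m _
        have h2 : d⁄dX k g * (C (R := k) ((Nat.factorial m : k))⁻¹ * g ^ m)
            = C (R := k) ((Nat.factorial m : k))⁻¹ * (d⁄dX k g * g ^ m) := by ring
        rw [h2, coeff_C_mul]
    _ = coeff (R := k) n (d⁄dX k g * psExp k g) := (coeff_mul_congr hagree).symm



lemma psDeriv_prod (s : Finset ι) (f : ι → PowerSeries k) :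
    d⁄dX k (∏ i ∈ s, f i) = ∑ j ∈ s, (∏ i ∈ s.erase j, f i) * d⁄dX k (f j) := by
  induction s using Finset.induction with
  | empty => simp
  | insert _ _ hx ih =>
    rename_i a s
    rw [Finset.prod_insert hx, Derivation.leibniz, smul_eq_mul, smul_eq_mul, ih,
      Finset.mul_sum, Finset.sum_insert hx, Finset.erase_insert hx, add_comm]
    congr 1
    apply Finset.sum_congr rfl
    intro j hj
    rw [Finset.erase_insert_of_ne (by rintro rfl; exact hx hj),
      Finset.prod_insert (fun h => hx (Finset.mem_of_mem_erase h))]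
    ring

lemma psDeriv_det (A : Matrix ι ι (PowerSeries k)) :
    d⁄dX k A.det = ∑ j, (A.updateCol j (fun i => d⁄dX k (A i j))).det := by
  rw [Matrix.det_apply, map_sum]
  have key : ∀ σ : Equiv.Perm ι, (d⁄dX k) (Equiv.Perm.sign σ • ∏ i, A (σ i) i)
      = ∑ j, Equiv.Perm.sign σ • ((∏ i ∈ Finset.univ.erase j, A (σ i) i) * d⁄dX k (A (σ j) j)) := by
    intro σ
    rw [Units.smul_def, map_zsmul, psDeriv_prod, Finset.smul_sum]
    simp [Units.smul_def]
  rw [Finset.sum_congr rfl fun σ _ => key σ, Finset.sum_comm]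
  apply Finset.sum_congr rfl
  intro j _
  rw [Matrix.det_apply]
  apply Finset.sum_congr rfl
  intro σ _
  congr 1
  rw [← Finset.mul_prod_erase Finset.univ _ (Finset.mem_univ j), Matrix.updateCol_self,
    mul_comm]
  congr 1
  apply Finset.prod_congr rfl
  intro i hi
  rw [Matrix.updateCol_ne (Finset.ne_of_mem_erase hi)]

noncomputable def matA (M : Matrix ι ι k) : Matrix ι ι (PowerSeries k) :=
  1 - (X : PowerSeries k) • M.map (C (R := k))

noncomputable def matN (M : Matrix ι ι k) : Matrix ι ι (PowerSeries k) :=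
  Matrix.of fun i j => mk fun n => (M ^ n) i j

lemma matA_mul_matN (M : Matrix ι ι k) : matA M * matN M = 1 := by
  ext i j n
  rw [Matrix.mul_apply]
  simp only [matA, matN, Matrix.sub_apply, Matrix.smul_apply, Matrix.map_apply, smul_eq_mul,
    Matrix.one_apply, Matrix.of_apply, sub_mul, ite_mul, one_mul, zero_mul, map_sum, map_sub,
    apply_ite (coeff (R := k) n), map_zero]
  rw [Finset.sum_sub_distrib, Finset.sum_ite_eq, if_pos (Finset.mem_univ i)]
  cases n with
  | zero =>
    simp [coeff_mk, Matrix.one_apply]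
  | succ n =>
    have : ∀ l, (coeff (R := k) (n+1)) (X * C (R := k) (M i l) * (PowerSeries.mk fun n => (M ^ n) l j)) =
        M i l * (M ^ n) l j := by
      intro l
      rw [mul_assoc, coeff_succ_X_mul, coeff_C_mul, coeff_mk]
    rw [Finset.sum_congr rfl fun l _ => this l]
    simp [coeff_mk, Matrix.one_apply, pow_succ', Matrix.mul_apply]

lemma adjugate_matA (M : Matrix ι ι k) :
    (matA M).adjugate = (matA M).det • matN M := by
  calc (matA M).adjugate = (matA M).adjugate * 1 := (mul_one _).symm
    _ = (matA M).adjugate * (matA M * matN M) := by rw [matA_mul_matN]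
    _ = ((matA M).adjugate * matA M) * matN M := (mul_assoc _ _ _).symm
    _ = ((matA M).det • 1) * matN M := by rw [Matrix.adjugate_mul]
    _ = (matA M).det • matN M := by rw [Matrix.smul_mul, one_mul]

lemma trace_matN_mul (M : Matrix ι ι k) :
    Matrix.trace (matN M * M.map (C (R := k))) = PowerSeries.mk fun n => Matrix.trace (M ^ (n+1)) := by
  ext n
  rw [coeff_mk, Matrix.trace, Matrix.trace, map_sum]
  apply Finset.sum_congr rfl
  intro j _
  rw [Matrix.diag_apply, Matrix.mul_apply, map_sum, pow_succ, Matrix.diag_apply,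
    Matrix.mul_apply]
  apply Finset.sum_congr rfl
  intro l _
  rw [matN, Matrix.map_apply, Matrix.of_apply, coeff_mul_C, coeff_mk]

lemma psDeriv_det_matA (M : Matrix ι ι k) :
    d⁄dX k (matA M).det
      = -(PowerSeries.mk (fun n => Matrix.trace (M ^ (n+1))) * (matA M).det) := by
  have hder : (∀ j, (fun i => d⁄dX k (matA M i j)) = fun i => -(M.map (C (R := k)) i j)) := by
    intro j
    funext i
    have : matA M i j = (1 : Matrix ι ι (PowerSeries k)) i j - X * C (R := k) (M i j) := by
      simp [matA, Matrix.sub_apply, Matrix.smul_apply, smul_eq_mul, Matrix.map_apply]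
    rw [this, map_sub, Derivation.leibniz, derivative_X, derivative_C]
    have h1 : d⁄dX k ((1 : Matrix ι ι (PowerSeries k)) i j) = 0 := by
      rw [Matrix.one_apply]
      split
      · exact Derivation.map_one_eq_zero _
      · exact map_zero _
    rw [h1]
    simp
  rw [psDeriv_det]
  have : ∀ j, ((matA M).updateCol j fun i => d⁄dX k (matA M i j)).det
      = -(((matA M).adjugate *ᵥ (fun i => M.map (C (R := k)) i j)) j) := by
    intro j
    rw [hder j, ← Matrix.cramer_apply]
    have hneg : (fun i => -(M.map (C (R := k)) i j)) = -(fun i => M.map (C (R := k)) i j) := rfl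
    rw [hneg, map_neg, Pi.neg_apply, Matrix.cramer_apply, ← Matrix.cramer_apply,
      Matrix.cramer_eq_adjugate_mulVec]
  rw [Finset.sum_congr rfl fun j _ => this j, Finset.sum_neg_distrib]
  have : ∑ j, (((matA M).adjugate *ᵥ (fun i => M.map (C (R := k)) i j)) j)
      = Matrix.trace ((matA M).adjugate * M.map (C (R := k))) := by
    rw [Matrix.trace]
    apply Finset.sum_congr rfl
    intro j _
    rw [Matrix.diag_apply, Matrix.mul_apply, Matrix.mulVec, dotProduct]
  rw [this, adjugate_matA, Matrix.smul_mul, Matrix.trace_smul, smul_eq_mul, trace_matN_mul,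
    mul_comm]

end Aux

/-- for a linear endomorphism `φ` of a finite-dimensional vector space `V` over a
field `k` of characteristic zero, `exp (∑_{n ≥ 1} tr(φ^n)/n · T^n) = det(1 - T·φ)⁻¹` in `k[[T]]`,
where `det(1 - T·φ)` is the reverse characteristic polynomial of `φ`. -/
theorem stmt_0 (k V : Type) [Field k] [CharZero k] [AddCommGroup V] [Module k V]
    [FiniteDimensional k V] (φ : V →ₗ[k] V) :
    psExp k (PowerSeries.mk fun n =>
        if n = 0 then 0 else (n : k)⁻¹ * LinearMap.trace k V (φ ^ n)) =
      (((LinearMap.charpoly φ).reverse : PowerSeries k))⁻¹ := by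
  classical
  let b := Module.finBasis k V
  set M : Matrix (Fin (Module.finrank k V)) (Fin (Module.finrank k V)) k :=
    LinearMap.toMatrix b b φ with hM
  set S : PowerSeries k := PowerSeries.mk fun n => Matrix.trace (M ^ (n + 1)) with hS
  set g : PowerSeries k := PowerSeries.mk fun n =>
    if n = 0 then 0 else (n : k)⁻¹ * LinearMap.trace k V (φ ^ n) with hg
  set P : PowerSeries k := ((LinearMap.charpoly φ).reverse : PowerSeries k) with hPdef
  have hg0 : constantCoeff (R := k) g = 0 := by
    rw [← coeff_zero_eq_constantCoeff_apply, hg, coeff_mk, if_pos rfl]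
  have hpow : ∀ n : ℕ, LinearMap.toMatrix b b (φ ^ n) = M ^ n := fun n =>
    map_pow (LinearMap.toMatrixAlgEquiv b) φ n
  have htr : ∀ n : ℕ, LinearMap.trace k V (φ ^ n) = Matrix.trace (M ^ n) := by
    intro n
    rw [LinearMap.trace_eq_matrix_trace k b, hpow n]
  have hgd : d⁄dX k g = S := by
    ext n
    rw [coeff_derivative, hg, coeff_mk, hS, coeff_mk, if_neg (Nat.succ_ne_zero n), htr]
    have hn : ((n : k) + 1) ≠ 0 := by
      have := Nat.cast_ne_zero (R := k).mpr (Nat.succ_ne_zero n)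
      push_cast at this
      exact this
    push_cast
    field_simp
  have hP : P = (matA M).det := by
    rw [hPdef, ← LinearMap.charpoly_toMatrix φ b, Matrix.reverse_charpoly, Matrix.charpolyRev]
    rw [show ((Matrix.det (1 - (Polynomial.X : Polynomial k) • M.map Polynomial.C) :
        Polynomial k) : PowerSeries k)
      = Polynomial.coeToPowerSeries.ringHom
          (Matrix.det (1 - (Polynomial.X : Polynomial k) • M.map Polynomial.C)) from rfl]
    rw [RingHom.map_det, RingHom.mapMatrix_apply]
    congr 1
    apply Matrix.ext
    intro i j
    simp only [Matrix.map_apply, Matrix.sub_apply, Matrix.smul_apply, smul_eq_mul, map_sub,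
      map_mul, Polynomial.coeToPowerSeries.ringHom_apply, matA]
    rw [Polynomial.coe_X, Polynomial.coe_C]
    congr 1
    rcases eq_or_ne i j with h | h <;>
      simp [Matrix.one_apply, h, Polynomial.coe_one, Polynomial.coe_zero]
  have hPd : d⁄dX k P = -(S * P) := by
    rw [hP, hS]
    exact psDeriv_det_matA M
  have hP0 : constantCoeff (R := k) P = 1 := by
    rw [hPdef, Polynomial.constantCoeff_coe, Polynomial.coeff_zero_reverse,
      (LinearMap.charpoly_monic φ).leadingCoeff]
  have hkey : psExp k g * P = 1 := by
    apply PowerSeries.derivative.ext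
    · rw [Derivation.leibniz, smul_eq_mul, smul_eq_mul, hPd, psExp_deriv hg0, hgd,
        Derivation.map_one_eq_zero]
      ring
    · rw [map_mul, constantCoeff_psExp, hP0, one_mul, map_one]
  exact (PowerSeries.eq_inv_iff_mul_eq_one (by rw [hP0]; exact one_ne_zero)).mpr hkey
end

section
/- Let k be a field of characteristic 0, V a finite-dimensional k-vector space and φ an endomorphism of V. Then ∑_{n≥0} tr(Sym^n φ)·T^n = (det(1 − T·φ))^{-1} in k[[T]], where Sym^n φ is the induced endomorphism of the n-th symmetric power of V. -/
open PowerSeries PiTensorProduct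

open scoped TensorProduct

/-- The submodule of relations defining the `n`-th symmetric power as a quotient of the
`n`-th tensor power: it is spanned by the elements `v₁ ⊗ ⋯ ⊗ vₙ - v_{σ(1)} ⊗ ⋯ ⊗ v_{σ(n)}`. -/
noncomputable def symRel (k : Type) [Field k] (n : ℕ) (V : Type) [AddCommGroup V]
    [Module k V] : Submodule k (⨂[k] (_ : Fin n), V) :=
  Submodule.span k
    {x | ∃ (σ : Equiv.Perm (Fin n)) (v : Fin n → V),
      x = PiTensorProduct.tprod k v - PiTensorProduct.tprod k (v ∘ σ)}

/-- The `n`-th symmetric power of `V`, as the quotient of the `n`-th tensor power by the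
symmetrization relations. -/
noncomputable def SymPow (k : Type) [Field k] (n : ℕ) (V : Type) [AddCommGroup V]
    [Module k V] : Type :=
  (⨂[k] (_ : Fin n), V) ⧸ symRel k n V

noncomputable instance (k : Type) [Field k] (n : ℕ) (V : Type) [AddCommGroup V] [Module k V] :
    AddCommGroup (SymPow k n V) :=
  inferInstanceAs (AddCommGroup ((⨂[k] (_ : Fin n), V) ⧸ symRel k n V))

noncomputable instance (k : Type) [Field k] (n : ℕ) (V : Type) [AddCommGroup V] [Module k V] :
    Module k (SymPow k n V) :=
  inferInstanceAs (Module k ((⨂[k] (_ : Fin n), V) ⧸ symRel k n V))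

/-- The endomorphism `Sym^n φ` of the `n`-th symmetric power induced functorially by `φ`. -/
noncomputable def symPowMap (k : Type) [Field k] (n : ℕ) (V : Type) [AddCommGroup V]
    [Module k V] (φ : V →ₗ[k] V) : SymPow k n V →ₗ[k] SymPow k n V :=
  Submodule.mapQ (symRel k n V) (symRel k n V)
    (PiTensorProduct.map fun _ : Fin n => φ)
    (by
      rw [symRel, Submodule.span_le]
      rintro x ⟨σ, v, rfl⟩
      simp only [SetLike.mem_coe, Submodule.mem_comap, map_sub, PiTensorProduct.map_tprod]
      exact Submodule.subset_span ⟨σ, fun i => φ (v i), rfl⟩)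


open Finset in
/-- The multiset associated to a tuple. -/
def mkSym {n d : ℕ} (f : Fin n → Fin d) : Sym (Fin d) n :=
  ⟨Multiset.map f Finset.univ.val, by simp⟩

lemma mkSym_comp_perm {n d : ℕ} (f : Fin n → Fin d) (σ : Equiv.Perm (Fin n)) :
    mkSym (f ∘ σ) = mkSym f := by
  refine Subtype.ext ?_
  show Multiset.map (f ∘ σ) Finset.univ.val = Multiset.map f Finset.univ.val
  rw [← Multiset.map_map]
  congr 1
  have : (Finset.univ.map σ.toEmbedding).val = Finset.univ.val := by
    rw [Finset.map_univ_equiv]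
  simpa [Finset.map_val] using this

lemma mkSym_coe_eq_ofFn {n d : ℕ} (f : Fin n → Fin d) :
    (mkSym f).1 = (List.ofFn f : List (Fin d)) := by
  show Multiset.map f Finset.univ.val = _
  have : (Finset.univ.val : Multiset (Fin n)) = (List.finRange n : List (Fin n)) := by
    simp [Finset.univ, Fintype.elems, List.finRange]
  rw [this]
  simp [List.ofFn_eq_map]

lemma monotone_eq_of_mkSym_eq {n d : ℕ} {f g : Fin n → Fin d} (hf : Monotone f)
    (hg : Monotone g) (h : mkSym f = mkSym g) : f = g := by
  have h' : (List.ofFn f : Multiset (Fin d)) = (List.ofFn g : Multiset (Fin d)) := by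
    rw [← mkSym_coe_eq_ofFn f, ← mkSym_coe_eq_ofFn g, h]
  rw [Multiset.coe_eq_coe] at h'
  have hsf : (List.ofFn f).Pairwise (· ≤ ·) := by
    rw [List.pairwise_ofFn]
    intro i j hij; exact hf hij.le
  have hsg : (List.ofFn g).Pairwise (· ≤ ·) := by
    rw [List.pairwise_ofFn]
    intro i j hij; exact hg hij.le
  exact List.ofFn_injective (List.Perm.eq_of_pairwise' hsf hsg h')

lemma exists_monotone_mkSym {n d : ℕ} (m : Sym (Fin d) n) :
    ∃ f : Fin n → Fin d, Monotone f ∧ mkSym f = m := by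
  classical
  set l := Multiset.sort (m : Multiset (Fin d)) (· ≤ ·) with hl
  have hlen : l.length = n := by rw [hl, Multiset.length_sort]; exact m.2
  refine ⟨fun i => l.get (Fin.cast hlen.symm i), ?_, ?_⟩
  · intro i j hij
    exact List.Pairwise.rel_get_of_le (Multiset.pairwise_sort _ _) (by simpa using hij)
  · refine Subtype.ext ?_
    show (mkSym _).1 = (m : Multiset (Fin d))
    rw [mkSym_coe_eq_ofFn]
    have : List.ofFn (fun i => l.get (Fin.cast hlen.symm i)) = l := by
      apply List.ext_get (by simp [hlen])
      intro i h1 h2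
      simp
    rw [this, hl]
    simp [Multiset.sort_eq]

/-- The monotone representative of a multiset. -/
noncomputable def sortFun {n d : ℕ} (m : Sym (Fin d) n) : Fin n → Fin d :=
  (exists_monotone_mkSym m).choose

lemma monotone_sortFun {n d : ℕ} (m : Sym (Fin d) n) : Monotone (sortFun m) :=
  (exists_monotone_mkSym m).choose_spec.1

lemma mkSym_sortFun {n d : ℕ} (m : Sym (Fin d) n) : mkSym (sortFun m) = m :=
  (exists_monotone_mkSym m).choose_spec.2

lemma sortFun_mkSym_of_monotone {n d : ℕ} {f : Fin n → Fin d} (hf : Monotone f) :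
    sortFun (mkSym f) = f :=
  monotone_eq_of_mkSym_eq (monotone_sortFun _) hf (mkSym_sortFun _)

lemma comp_sort_eq_sortFun {n d : ℕ} (g : Fin n → Fin d) :
    g ∘ Tuple.sort g = sortFun (mkSym g) := by
  refine monotone_eq_of_mkSym_eq (Tuple.monotone_sort g) (monotone_sortFun _) ?_
  rw [mkSym_comp_perm, mkSym_sortFun]


section BasisLayer

variable {k : Type} [Field k] {V : Type} [AddCommGroup V] [Module k V] {n d : ℕ}

local notation "π" => Submodule.mkQ (symRel k n V)

lemma pi_tprod_comp_perm (v : Fin n → V) (σ : Equiv.Perm (Fin n)) :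
    π (PiTensorProduct.tprod k (v ∘ σ)) = π (PiTensorProduct.tprod k v) := by
  rw [Submodule.mkQ_apply, Submodule.mkQ_apply, Submodule.Quotient.eq]
  have h : PiTensorProduct.tprod k v - PiTensorProduct.tprod k (v ∘ σ) ∈ symRel k n V :=
    Submodule.subset_span ⟨σ, v, rfl⟩
  simpa [neg_sub] using Submodule.neg_mem _ h

/-- Expansion of a pure tensor of linear combinations. -/
lemma tprod_expand (c : Fin n → Fin d → k) (w : Fin d → V) :
    PiTensorProduct.tprod k (fun i => ∑ j, c i j • w j) =
      ∑ g : Fin n → Fin d, (∏ i, c i (g i)) • PiTensorProduct.tprod k (w ∘ g) := by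
  rw [MultilinearMap.map_sum (PiTensorProduct.tprod k) (fun i j => c i j • w j)]
  exact Finset.sum_congr rfl fun g _ => MultilinearMap.map_smul_univ _ _ _

/-- The candidate basis family of the symmetric power. -/
noncomputable def symBasisFam (b : Module.Basis (Fin d) k V) (m : Sym (Fin d) n) : SymPow k n V :=
  π (PiTensorProduct.tprod k (b ∘ sortFun m))

lemma pi_tprod_basis (b : Module.Basis (Fin d) k V) (g : Fin n → Fin d) :
    π (PiTensorProduct.tprod k (b ∘ g)) = symBasisFam b (mkSym g) := by
  rw [symBasisFam, ← comp_sort_eq_sortFun g]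
  have : b ∘ (g ∘ Tuple.sort g) = (b ∘ g) ∘ (Tuple.sort g) := rfl
  rw [this, pi_tprod_comp_perm]

/-- The multilinear "coordinate reading" map. -/
noncomputable def readerML (b : Module.Basis (Fin d) k V) :
    MultilinearMap k (fun _ : Fin n => V) (Sym (Fin d) n →₀ k) :=
  ∑ g : Fin n → Fin d, (Finsupp.lsingle (mkSym g)).compMultilinearMap
      ((MultilinearMap.mkPiAlgebra k (Fin n) k).compLinearMap fun i => b.coord (g i))

lemma readerML_apply (b : Module.Basis (Fin d) k V) (v : Fin n → V) :
    readerML b v = ∑ g : Fin n → Fin d, Finsupp.single (mkSym g) (∏ i, b.repr (v i) (g i)) := by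
  simp [readerML, Finsupp.lsingle, Module.Basis.coord]

noncomputable def reader (b : Module.Basis (Fin d) k V) : (⨂[k] (_ : Fin n), V) →ₗ[k] (Sym (Fin d) n →₀ k) :=
  PiTensorProduct.lift (readerML b)

lemma reader_tprod (b : Module.Basis (Fin d) k V) (v : Fin n → V) :
    reader b (PiTensorProduct.tprod k v) =
      ∑ g : Fin n → Fin d, Finsupp.single (mkSym g) (∏ i, b.repr (v i) (g i)) := by
  rw [reader, PiTensorProduct.lift.tprod, readerML_apply]

lemma reader_rel (b : Module.Basis (Fin d) k V) : symRel k n V ≤ LinearMap.ker (reader b) := by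
  rw [symRel, Submodule.span_le]
  rintro x ⟨σ, v, rfl⟩
  simp only [SetLike.mem_coe, LinearMap.mem_ker, map_sub, sub_eq_zero, reader_tprod]
  have key : ∀ g : Fin n → Fin d,
      Finsupp.single (mkSym g) (∏ i, b.repr (v i) (g i)) =
        Finsupp.single (mkSym (g ∘ σ)) (∏ i, b.repr ((v ∘ σ) i) ((g ∘ σ) i)) := by
    intro g
    rw [mkSym_comp_perm]
    congr 1
    exact (Equiv.prod_comp σ (fun i => b.repr (v i) (g i))).symm
  refine Fintype.sum_bijective (fun g : Fin n → Fin d => g ∘ σ) ?_ _ _ key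
  constructor
  · intro a b hab
    funext i
    have := congrFun hab (σ.symm i)
    simpa using this
  · intro h
    exact ⟨h ∘ σ.symm, by funext i; simp⟩

noncomputable def readerQ (b : Module.Basis (Fin d) k V) : SymPow k n V →ₗ[k] (Sym (Fin d) n →₀ k) :=
  Submodule.liftQ _ (reader b) (reader_rel b)

lemma readerQ_pi (b : Module.Basis (Fin d) k V) (x : ⨂[k] (_ : Fin n), V) :
    readerQ b (π x) = reader b x := rfl

lemma readerQ_basisFam (b : Module.Basis (Fin d) k V) (m : Sym (Fin d) n) :
    readerQ b (symBasisFam b m) = Finsupp.single m 1 := by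
  rw [symBasisFam, readerQ_pi, reader_tprod]
  rw [Finset.sum_eq_single (sortFun m)]
  · rw [mkSym_sortFun]
    congr 1
    rw [Finset.prod_eq_one]
    intro i _
    simp [Module.Basis.repr_self]
  · intro g _ hg
    have : ∃ i, g i ≠ sortFun m i := by
      by_contra h
      push_neg at h
      exact hg (funext h)
    obtain ⟨i, hi⟩ := this
    have : (b.repr (b (sortFun m i))) (g i) = 0 := by
      rw [Module.Basis.repr_self, Finsupp.single_apply, if_neg (Ne.symm hi)]
    rw [Finset.prod_eq_zero (Finset.mem_univ i) this, Finsupp.single_zero]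
  · intro h
    exact absurd (Finset.mem_univ _) h

lemma symBasisFam_linearIndependent (b : Module.Basis (Fin d) k V) :
    LinearIndependent k (symBasisFam b (n := n)) := by
  apply LinearIndependent.of_comp (readerQ b)
  have : (⇑(readerQ b) ∘ symBasisFam b) = fun m : Sym (Fin d) n => Finsupp.single m (1 : k) := by
    funext m
    exact readerQ_basisFam b m
  rw [this]
  have := (Finsupp.basisSingleOne (R := k) (ι := Sym (Fin d) n)).linearIndependent
  simpa [Finsupp.coe_basisSingleOne] using this

lemma symBasisFam_span (b : Module.Basis (Fin d) k V) :
    ⊤ ≤ Submodule.span k (Set.range (symBasisFam b (n := n))) := by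
  rintro x -
  obtain ⟨y, rfl⟩ := Submodule.mkQ_surjective (symRel k n V) x
  have hy : y ∈ (⊤ : Submodule k (⨂[k] (_ : Fin n), V)) := trivial
  rw [← PiTensorProduct.span_tprod_eq_top] at hy
  induction hy using Submodule.span_induction with
  | mem z hz =>
      obtain ⟨v, rfl⟩ := hz
      have hexp : PiTensorProduct.tprod k v =
          ∑ g : Fin n → Fin d, (∏ i, b.repr (v i) (g i)) • PiTensorProduct.tprod k (b ∘ g) := by
        conv_lhs => rw [show v = fun i => ∑ j, b.repr (v i) j • b j by
          funext i; rw [Module.Basis.sum_repr]]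
        exact tprod_expand (fun i j => b.repr (v i) j) b
      rw [hexp, map_sum]
      refine Submodule.sum_mem _ fun g _ => ?_
      rw [map_smul]
      refine Submodule.smul_mem _ _ (Submodule.subset_span ?_)
      rw [pi_tprod_basis]
      exact Set.mem_range_self _
  | zero => exact Submodule.zero_mem _
  | add _ _ _ _ h1 h2 => rw [map_add]; exact Submodule.add_mem _ h1 h2
  | smul c _ _ h => rw [map_smul]; exact Submodule.smul_mem _ _ h

/-- The basis of the symmetric power indexed by multisets. -/
noncomputable def symPowBasis (b : Module.Basis (Fin d) k V) : Module.Basis (Sym (Fin d) n) k (SymPow k n V) :=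
  Module.Basis.mk (symBasisFam_linearIndependent b) (symBasisFam_span b)

lemma symPowBasis_repr (b : Module.Basis (Fin d) k V) (x : SymPow k n V) :
    (symPowBasis b).repr x = readerQ b x := by
  have h : ((symPowBasis (n := n) b).repr.toLinearMap : SymPow k n V →ₗ[k] _) = readerQ b := by
    apply Module.Basis.ext (symPowBasis (n := n) b)
    intro m
    have h1 : (symPowBasis (n := n) b).repr ((symPowBasis b) m) = Finsupp.single m 1 :=
      Module.Basis.repr_self _ m
    have h2 : (symPowBasis b) m = symBasisFam b m := Module.Basis.mk_apply _ _ m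
    simp only [LinearEquiv.coe_coe, h2, readerQ_basisFam]
    rw [← h2, h1]
  exact LinearMap.congr_fun h x

end BasisLayer


section TraceLayer

variable {k : Type} [Field k] {V : Type} [AddCommGroup V] [Module k V] {n d : ℕ}

/-- The universal polynomial expression for the trace of the `n`-th symmetric power. -/
noncomputable def traceAux (n d : ℕ) {R : Type*} [CommSemiring R]
    (A : Matrix (Fin d) (Fin d) R) : R :=
  ∑ g : Fin n → Fin d, ∏ i, A (g i) (sortFun (mkSym g) i)

lemma symPowMap_basisFam (b : Module.Basis (Fin d) k V) (φ : V →ₗ[k] V) (m : Sym (Fin d) n) :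
    symPowMap k n V φ (symBasisFam b m) =
      ∑ g : Fin n → Fin d,
        (∏ i, (LinearMap.toMatrix b b φ) (g i) (sortFun m i)) • symBasisFam b (mkSym g) := by
  have hq : symPowMap k n V φ (symBasisFam b m) =
      Submodule.mkQ (symRel k n V)
        (PiTensorProduct.map (fun _ : Fin n => φ)
          (PiTensorProduct.tprod k (⇑b ∘ sortFun m))) := rfl
  rw [hq, PiTensorProduct.map_tprod]
  have hexp : (PiTensorProduct.tprod k fun i => ((fun _ : Fin n => φ) i) ((b ∘ sortFun m) i)) =
      ∑ g : Fin n → Fin d,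
        (∏ i, b.repr (φ (b (sortFun m i))) (g i)) • PiTensorProduct.tprod k (b ∘ g) := by
    conv_lhs => rw [show (fun i => ((fun _ : Fin n => φ) i) ((b ∘ sortFun m) i)) =
      (fun i => ∑ j, b.repr (φ (b (sortFun m i))) j • b j) by
        funext i; rw [Module.Basis.sum_repr]; rfl]
    exact tprod_expand (fun i j => b.repr (φ (b (sortFun m i))) j) b
  rw [hexp, map_sum]
  refine Finset.sum_congr rfl fun g _ => ?_
  rw [map_smul, pi_tprod_basis]
  congr 1
  refine Finset.prod_congr rfl fun i _ => ?_
  rw [LinearMap.toMatrix_apply]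

lemma trace_symPowMap (b : Module.Basis (Fin d) k V) (φ : V →ₗ[k] V) :
    LinearMap.trace k (SymPow k n V) (symPowMap k n V φ) =
      traceAux n d (LinearMap.toMatrix b b φ) := by
  classical
  rw [LinearMap.trace_eq_matrix_trace k (symPowBasis b (n := n)), Matrix.trace]
  have hentry : ∀ m : Sym (Fin d) n,
      (LinearMap.toMatrix (symPowBasis b) (symPowBasis b) (symPowMap k n V φ)).diag m =
        ∑ g : Fin n → Fin d,
          if mkSym g = m then (∏ i, (LinearMap.toMatrix b b φ) (g i) (sortFun (mkSym g) i))
          else 0 := by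
    intro m
    rw [Matrix.diag, LinearMap.toMatrix_apply]
    rw [show (symPowBasis (n := n) b) m = symBasisFam b m from Module.Basis.mk_apply _ _ m]
    rw [symPowMap_basisFam b φ m, map_sum]
    rw [Finsupp.coe_finset_sum, Finset.sum_apply]
    refine Finset.sum_congr rfl fun g _ => ?_
    rw [map_smul, symPowBasis_repr, readerQ_basisFam]
    rw [Finsupp.coe_smul, Pi.smul_apply, Finsupp.single_apply, smul_eq_mul]
    by_cases h : mkSym g = m
    · rw [if_pos h, if_pos h, mul_one, h]
    · rw [if_neg h, if_neg h, mul_zero]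
  rw [Finset.sum_congr rfl fun m _ => hentry m, Finset.sum_comm, traceAux]
  refine Finset.sum_congr rfl fun g _ => ?_
  rw [Finset.sum_ite_eq Finset.univ (mkSym g)
    (fun _ => ∏ i, (LinearMap.toMatrix b b φ) (g i) (sortFun (mkSym g) i))]
  rw [if_pos (Finset.mem_univ _)]

end TraceLayer


section MatrixLayer

variable {n d : ℕ}

lemma traceAux_map {R S : Type*} [CommSemiring R] [CommSemiring S] (f : R →+* S)
    (A : Matrix (Fin d) (Fin d) R) :
    traceAux n d (A.map f) = f (traceAux n d A) := by
  simp [traceAux, map_sum, map_prod, Matrix.map_apply]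

lemma traceAux_triangular {K : Type*} [Field K] (A : Matrix (Fin d) (Fin d) K)
    (hA : A.BlockTriangular id) :
    traceAux n d A = ∑ m : Sym (Fin d) n, ((m : Multiset (Fin d)).map (fun i => A i i)).prod := by
  classical
  have hzero : ∀ g : Fin n → Fin d, ¬ Monotone g → ∏ i, A (g i) (sortFun (mkSym g) i) = 0 := by
    intro g hg
    by_contra h
    have hfac : ∀ i, A (g i) (sortFun (mkSym g) i) ≠ 0 := fun i =>
      Finset.prod_ne_zero_iff.mp h i (Finset.mem_univ i)
    have hle : ∀ i, g i ≤ sortFun (mkSym g) i := by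
      intro i
      by_contra hlt
      push_neg at hlt
      exact hfac i (hA hlt)
    have hsum : ∑ i, ((sortFun (mkSym g)) i : ℕ) = ∑ i, ((g i : ℕ)) := by
      rw [← comp_sort_eq_sortFun g]
      exact Equiv.sum_comp (Tuple.sort g) (fun i => ((g i : ℕ)))
    have heq : ∀ i, g i = sortFun (mkSym g) i := by
      by_contra hc
      push_neg at hc
      obtain ⟨i, hi⟩ := hc
      have hlt : ((g i : ℕ)) < ((sortFun (mkSym g) i : ℕ)) :=
        lt_of_le_of_ne (hle i) (fun hv => hi (Fin.ext hv))
      have h2 : ∑ j, ((g j : ℕ)) < ∑ j, ((sortFun (mkSym g) j : ℕ)) :=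
        Finset.sum_lt_sum (fun j _ => hle j) ⟨i, Finset.mem_univ i, hlt⟩
      rw [hsum] at h2
      exact lt_irrefl _ h2
    exact hg (funext heq ▸ monotone_sortFun (mkSym g))
  rw [traceAux, ← Finset.sum_fiberwise Finset.univ (fun g : Fin n → Fin d => mkSym g)
    (fun g => ∏ i, A (g i) (sortFun (mkSym g) i))]
  refine Finset.sum_congr rfl fun m _ => ?_
  rw [Finset.sum_eq_single_of_mem (sortFun m)
    (by simp [Finset.mem_filter, mkSym_sortFun])]
  · rw [mkSym_sortFun]
    have : ((m : Multiset (Fin d))) = Multiset.map (sortFun m) Finset.univ.val := by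
      conv_lhs => rw [← mkSym_sortFun m]
      rfl
    rw [this, Multiset.map_map, ← Finset.prod_eq_multiset_prod]
    rfl
  · intro g hgmem hgne
    refine hzero g fun hmono => ?_
    have : g = sortFun m := by
      have hm : mkSym g = m := (Finset.mem_filter.mp hgmem).2
      rw [← hm, sortFun_mkSym_of_monotone hmono]
    exact hgne this

lemma charpolyRev_triangular {R : Type*} [CommRing R] (A : Matrix (Fin d) (Fin d) R)
    (hA : A.BlockTriangular id) :
    A.charpolyRev = ∏ i, (1 - Polynomial.C (A i i) * Polynomial.X) := by
  rw [Matrix.charpolyRev]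
  have htri : (1 - (Polynomial.X : Polynomial R) • A.map Polynomial.C).BlockTriangular id := by
    intro i j hij
    have hne : i ≠ j := fun h => by simp [h] at hij
    simp only [Matrix.sub_apply, Matrix.smul_apply, Matrix.map_apply, Matrix.one_apply_ne hne,
      hA hij, map_zero, smul_zero, sub_zero]
  rw [Matrix.det_of_upperTriangular htri]
  refine Finset.prod_congr rfl fun i _ => ?_
  simp only [Matrix.sub_apply, Matrix.smul_apply, Matrix.map_apply, Matrix.one_apply_eq,
    smul_eq_mul]
  ring

lemma charpolyRev_map {R S : Type*} [CommRing R] [CommRing S] (f : R →+* S)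
    (A : Matrix (Fin d) (Fin d) R) :
    (A.map f).charpolyRev = A.charpolyRev.map f := by
  unfold Matrix.charpolyRev
  rw [← Polynomial.coe_mapRingHom, RingHom.map_det]
  congr 1
  ext i j
  by_cases h : i = j <;>
    simp [Matrix.map_apply, Matrix.sub_apply, Matrix.smul_apply, Matrix.one_apply, h,
      Polynomial.map_one, Polynomial.map_mul]

end MatrixLayer

section Triangularize

variable {K : Type*} [Field K] [IsAlgClosed K]

theorem exists_triangular_basis (d : ℕ) (V : Type*) [AddCommGroup V] [Module K V]
    [FiniteDimensional K V] (hd : Module.finrank K V = d) (φ : V →ₗ[K] V) :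
    ∃ b : Module.Basis (Fin d) K V, ∀ j, φ (b j) ∈ Submodule.span K (b '' Set.Iic j) := by
  induction d generalizing V with
  | zero =>
      have : Subsingleton V := Module.finrank_zero_iff.mp hd
      exact ⟨Module.Basis.empty V, fun j => j.elim0⟩
  | succ d ih =>
      have hnt : Nontrivial V := by
        apply Module.nontrivial_of_finrank_pos (R := K)
        omega
      obtain ⟨μ, hμ⟩ := Module.End.exists_eigenvalue
        (φ.dualMap : Module.Dual K V →ₗ[K] Module.Dual K V)
      obtain ⟨ξ, hξmem, hξne⟩ := hμ.exists_hasEigenvector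
      have hξeq : φ.dualMap ξ = μ • ξ := Module.End.mem_eigenspace_iff.mp hξmem
      set H : Submodule K V := LinearMap.ker ξ with hH
      have hinv : ∀ x ∈ H, φ x ∈ H := by
        intro x hx
        have : ξ (φ x) = μ * ξ x := by
          have := congrFun (congrArg (DFunLike.coe) hξeq) x
          simpa [LinearMap.dualMap_apply] using this
        simp only [hH, LinearMap.mem_ker] at hx ⊢
        rw [this, hx, mul_zero]
      have hrange : LinearMap.range ξ = ⊤ := by
        rcases (DFunLike.ne_iff.mp hξne) with ⟨x, hx⟩
        simp only [LinearMap.zero_apply] at hx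
        rw [LinearMap.range_eq_top]
        intro c
        exact ⟨(c / ξ x) • x, by rw [map_smul, smul_eq_mul, div_mul_cancel₀ c hx]⟩
      have hrank : Module.finrank K H = d := by
        have h1 := LinearMap.finrank_range_add_finrank_ker ξ
        rw [hrange, hd] at h1
        have h2 : Module.finrank K (⊤ : Submodule K K) = 1 := by
          rw [finrank_top]; exact Module.finrank_self K
        rw [h2] at h1
        rw [hH]
        omega
      obtain ⟨c, hc⟩ := ih H hrank (φ.restrict hinv)
      obtain ⟨w, hw⟩ : ∃ w, ξ w ≠ 0 := by
        rcases (DFunLike.ne_iff.mp hξne) with ⟨x, hx⟩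
        exact ⟨x, by simpa using hx⟩
      have hwH : w ∉ H := by simp [hH, LinearMap.mem_ker, hw]
      have h1 : LinearIndependent K (fun i => (c i : V)) :=
        c.linearIndependent.map' H.subtype (Submodule.ker_subtype H)
      have hspan : Submodule.span K (Set.range (fun i => (c i : V))) = H := by
        have hr : Set.range (fun i => (c i : V)) = H.subtype '' Set.range c := by
          ext x
          simp [Set.range_comp]
        rw [hr, ← Submodule.map_span, c.span_eq, Submodule.map_top, Submodule.range_subtype]
      have hindep : LinearIndependent K (Fin.snoc (fun i => (c i : V)) w : Fin (d + 1) → V) := by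
        rw [linearIndependent_fin_snoc]
        exact ⟨h1, by rw [hspan]; exact hwH⟩
      have hcard : Fintype.card (Fin (d + 1)) = Module.finrank K V := by simp [hd]
      let B := basisOfLinearIndependentOfCardEqFinrank hindep hcard
      have hB : ⇑B = Fin.snoc (fun i => (c i : V)) w :=
        coe_basisOfLinearIndependentOfCardEqFinrank hindep hcard
      refine ⟨B, ?_⟩
      intro j
      induction j using Fin.lastCases with
      | last =>
          have : Set.Iic (Fin.last d) = Set.univ := by
            ext x
            simp [Fin.le_last]
          rw [this, Set.image_univ, B.span_eq]
          exact Submodule.mem_top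
      | cast i =>
          have hBi : B (Fin.castSucc i) = (c i : V) := by
            rw [hB]
            exact Fin.snoc_castSucc _ _ i
          rw [hBi]
          have hres : φ ((c i : V)) = ((φ.restrict hinv) (c i) : V) := rfl
          rw [hres]
          have hmem := hc i
          have : ((φ.restrict hinv) (c i) : V) ∈
              Submodule.map H.subtype (Submodule.span K (c '' Set.Iic i)) :=
            Submodule.mem_map_of_mem hmem
          rw [Submodule.map_span] at this
          refine Submodule.span_mono ?_ this
          intro x hx
          obtain ⟨y, ⟨i', hi', rfl⟩, rfl⟩ := hx
          refine ⟨Fin.castSucc i', ?_, ?_⟩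
          · exact Fin.castSucc_le_castSucc_iff.mpr hi'
          · rw [hB]
            simp [Fin.snoc_castSucc]

variable (K) in
theorem exists_triangular_matrix (d : ℕ) (V : Type*) [AddCommGroup V] [Module K V]
    [FiniteDimensional K V] (hd : Module.finrank K V = d) (φ : V →ₗ[K] V) :
    ∃ b : Module.Basis (Fin d) K V, (LinearMap.toMatrix b b φ).BlockTriangular id := by
  obtain ⟨b, hb⟩ := exists_triangular_basis d V hd φ
  refine ⟨b, ?_⟩
  intro i j hij
  rw [LinearMap.toMatrix_apply]
  have hsupp : ↑(b.repr (φ (b j))).support ⊆ Set.Iic j := (Module.Basis.mem_span_image b).mp (hb j)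
  by_contra h
  have : i ∈ (b.repr (φ (b j))).support := Finsupp.mem_support_iff.mpr h
  have : i ∈ Set.Iic j := hsupp this
  exact absurd this (by simpa using hij)

end Triangularize


section PowerSeriesLayer

variable {K : Type*} [Field K] {d : ℕ}

lemma geom_mul_eq_one (a : K) :
    (1 - PowerSeries.C a * PowerSeries.X) * PowerSeries.mk (fun j => a ^ j) = 1 := by
  ext n
  rw [sub_mul, one_mul, map_sub]
  cases n with
  | zero =>
      simp [PowerSeries.coeff_zero_eq_constantCoeff]
  | succ n =>
      rw [mul_assoc, PowerSeries.coeff_C_mul, PowerSeries.coeff_succ_X_mul]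
      simp [PowerSeries.coeff_mk, PowerSeries.coeff_one, pow_succ, mul_comm]

lemma multiset_prod_map_eq_prod_count (lam : Fin d → K) (m : Multiset (Fin d)) :
    (m.map lam).prod = ∏ i, lam i ^ m.count i := by
  classical
  induction m using Multiset.induction with
  | empty => simp
  | cons a m ih =>
      rw [Multiset.map_cons, Multiset.prod_cons, ih]
      have hc : ∀ i, (a ::ₘ m).count i = m.count i + (if i = a then 1 else 0) := by
        intro i; rw [Multiset.count_cons]
      calc lam a * ∏ i, lam i ^ m.count i
          = (∏ i, lam i ^ m.count i) * ∏ i, (if i = a then lam i else 1) := by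
            rw [Finset.prod_ite_eq' Finset.univ a lam, if_pos (Finset.mem_univ a)]
            ring
        _ = ∏ i, lam i ^ ((a ::ₘ m).count i) := by
            rw [← Finset.prod_mul_distrib]
            refine Finset.prod_congr rfl fun i _ => ?_
            rw [hc i, pow_add]
            congr 1
            split <;> simp

lemma sum_count_univ (m : Multiset (Fin d)) : ∑ i, m.count i = Multiset.card m := by
  classical
  induction m using Multiset.induction with
  | empty => simp
  | cons a s ih =>
      simp only [Multiset.count_cons, Finset.sum_add_distrib, ih, Multiset.card_cons]
      congr 1
      simp

lemma finsupp_sum_of_antidiag {n : ℕ} {l : Fin d →₀ ℕ}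
    (hl : l ∈ Finset.finsuppAntidiag (Finset.univ : Finset (Fin d)) n) :
    (Multiset.card (Finsupp.toMultiset l)) = n := by
  classical
  obtain ⟨h1, -⟩ := Finset.mem_finsuppAntidiag.mp hl
  rw [Finsupp.card_toMultiset, ← h1, Finsupp.sum]
  exact Finset.sum_subset (Finset.subset_univ _) (fun x _ hx => by
    simpa using Finsupp.notMem_support_iff.mp hx)

lemma toFinsupp_mem_antidiag {n : ℕ} (m : Sym (Fin d) n) :
    Multiset.toFinsupp (m : Multiset (Fin d)) ∈
      Finset.finsuppAntidiag (Finset.univ : Finset (Fin d)) n := by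
  classical
  rw [Finset.mem_finsuppAntidiag]
  refine ⟨?_, Finset.subset_univ _⟩
  have h : Finset.univ.sum ⇑(Multiset.toFinsupp (m : Multiset (Fin d))) =
      ∑ i, (m : Multiset (Fin d)).count i := by
    refine Finset.sum_congr rfl fun i _ => ?_
    simp [Multiset.toFinsupp_apply]
  rw [h, sum_count_univ]
  exact m.2

lemma mk_sym_sum_eq_prod_geom (lam : Fin d → K) :
    (PowerSeries.mk fun n => ∑ m : Sym (Fin d) n, ((m : Multiset (Fin d)).map lam).prod) =
      ∏ i, PowerSeries.mk (fun j => lam i ^ j) := by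
  classical
  ext n
  rw [PowerSeries.coeff_mk, PowerSeries.coeff_prod]
  refine Finset.sum_bij'
    (fun (m : Sym (Fin d) n) _ => Multiset.toFinsupp (m : Multiset (Fin d)))
    (fun (l : Fin d →₀ ℕ) hl => (⟨Finsupp.toMultiset l, finsupp_sum_of_antidiag hl⟩ : Sym (Fin d) n))
    (fun m _ => toFinsupp_mem_antidiag m)
    (fun l hl => Finset.mem_univ _)
    (fun m _ => by apply Subtype.ext; simp)
    (fun l hl => by simp)
    ?_
  intro m _
  rw [multiset_prod_map_eq_prod_count lam (m : Multiset (Fin d))]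
  refine Finset.prod_congr rfl fun i _ => ?_
  rw [PowerSeries.coeff_mk]
  congr 1

end PowerSeriesLayer


section Assembly

theorem matrix_key_algClosed {L : Type} [Field L] [IsAlgClosed L] {d : ℕ}
    (A : Matrix (Fin d) (Fin d) L) :
    (PowerSeries.mk fun n => traceAux n d A) * (A.charpolyRev : PowerSeries L) = 1 := by
  classical
  let b0 := Pi.basisFun L (Fin d)
  set φ := Matrix.toLin b0 b0 A with hφ
  have hA : LinearMap.toMatrix b0 b0 φ = A := LinearMap.toMatrix_toLin b0 b0 A
  have hfr : Module.finrank L (Fin d → L) = d := Module.finrank_fin_fun L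
  obtain ⟨b', hb'⟩ := exists_triangular_matrix L d (Fin d → L) hfr φ
  set M := LinearMap.toMatrix b' b' φ with hM
  have htr : ∀ n, traceAux n d A = traceAux n d M := by
    intro n
    rw [← hA, ← trace_symPowMap b0 φ, trace_symPowMap b' φ]
  have hcp : A.charpolyRev = M.charpolyRev := by
    rw [← Matrix.reverse_charpoly, ← Matrix.reverse_charpoly, ← hA,
      LinearMap.charpoly_toMatrix φ b0, LinearMap.charpoly_toMatrix φ b']
  have h1 : (PowerSeries.mk fun n => traceAux n d A) =
      PowerSeries.mk fun n => traceAux n d M := by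
    ext n
    rw [PowerSeries.coeff_mk, PowerSeries.coeff_mk, htr n]
  rw [h1, hcp, charpolyRev_triangular M hb']
  have h2 : (PowerSeries.mk fun n => traceAux n d M) =
      ∏ i, PowerSeries.mk (fun j => M i i ^ j) := by
    rw [← mk_sym_sum_eq_prod_geom (fun i => M i i)]
    ext n
    rw [PowerSeries.coeff_mk, PowerSeries.coeff_mk, traceAux_triangular M hb']
  rw [h2]
  have h3 : ((∏ i, (1 - Polynomial.C (M i i) * Polynomial.X) : Polynomial L) : PowerSeries L) =
      ∏ i, (1 - PowerSeries.C (M i i) * PowerSeries.X) := by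
    rw [show ((∏ i, (1 - Polynomial.C (M i i) * Polynomial.X) : Polynomial L) : PowerSeries L) =
      Polynomial.coeToPowerSeries.ringHom (∏ i, (1 - Polynomial.C (M i i) * Polynomial.X)) from rfl]
    rw [map_prod]
    refine Finset.prod_congr rfl fun i _ => ?_
    simp [Polynomial.coeToPowerSeries.ringHom_apply]
  rw [h3, ← Finset.prod_mul_distrib]
  refine Finset.prod_eq_one fun i _ => ?_
  rw [mul_comm]
  exact geom_mul_eq_one (M i i)

theorem matrix_key {K : Type} [Field K] {d : ℕ} (A : Matrix (Fin d) (Fin d) K) :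
    (PowerSeries.mk fun n => traceAux n d A) * (A.charpolyRev : PowerSeries K) = 1 := by
  let L := AlgebraicClosure K
  have hinj : Function.Injective (algebraMap K L) := (algebraMap K L).injective
  have hinjPS : Function.Injective (PowerSeries.map (algebraMap K L)) := by
    intro f g h
    ext n
    apply hinj
    rw [← PowerSeries.coeff_map, ← PowerSeries.coeff_map, h]
  apply hinjPS
  rw [_root_.map_mul, _root_.map_one]
  have h1 : PowerSeries.map (algebraMap K L) (PowerSeries.mk fun n => traceAux n d A)
      = PowerSeries.mk fun n => traceAux n d (A.map (algebraMap K L)) := by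
    ext n
    rw [PowerSeries.coeff_map, PowerSeries.coeff_mk, PowerSeries.coeff_mk, traceAux_map]
  have h2 : PowerSeries.map (algebraMap K L) (A.charpolyRev : PowerSeries K)
      = ((A.map (algebraMap K L)).charpolyRev : PowerSeries L) := by
    rw [charpolyRev_map]
    ext n
    rw [PowerSeries.coeff_map, Polynomial.coeff_coe, Polynomial.coeff_coe, Polynomial.coeff_map]
  rw [h1, h2]
  exact matrix_key_algClosed _

end Assembly


/-- `∑_{n≥0} tr(Sym^n φ) Tⁿ = det(1 - T·φ)⁻¹` in `k[[T]]`, where `det(1 - T·φ)` is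
the reverse characteristic polynomial of `φ`. -/
theorem stmt_2 (k V : Type) [Field k] [CharZero k] [AddCommGroup V] [Module k V]
    [FiniteDimensional k V] (φ : V →ₗ[k] V) :
    (PowerSeries.mk fun n => LinearMap.trace k (SymPow k n V) (symPowMap k n V φ)) =
      (((LinearMap.charpoly φ).reverse : PowerSeries k))⁻¹ := by
  classical
  let b : Module.Basis (Fin (Module.finrank k V)) k V := Module.finBasis k V
  set A := LinearMap.toMatrix b b φ with hA
  have hmk : (PowerSeries.mk fun n => LinearMap.trace k (SymPow k n V) (symPowMap k n V φ)) =
      PowerSeries.mk fun n => traceAux n (Module.finrank k V) A := by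
    ext n
    rw [PowerSeries.coeff_mk, PowerSeries.coeff_mk, trace_symPowMap b φ]
  have hcp : (LinearMap.charpoly φ).reverse = A.charpolyRev := by
    rw [← LinearMap.charpoly_toMatrix φ b, Matrix.reverse_charpoly]
  rw [hmk, hcp]
  have hc : PowerSeries.constantCoeff ((A.charpolyRev : PowerSeries k)) ≠ 0 := by
    rw [Polynomial.constantCoeff_coe, Polynomial.coeff_zero_eq_eval_zero,
      Matrix.eval_charpolyRev]
    exact one_ne_zero
  rw [PowerSeries.eq_inv_iff_mul_eq_one hc]
  exact matrix_key A
end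

section
/- Let k be a field, V a finite-dimensional k-vector space of dimension m, and φ an endomorphism of V. Then ∑_{n=0}^{m} tr(Λ^n φ)·T^n = det(1 + T·φ) in k[T], where Λ^n φ is the induced endomorphism of the n-th exterior power of V. -/
open Polynomial
open scoped Matrix

/-- The endomorphism `Λ^n φ` of the `n`-th exterior power induced by `φ`, obtained by
restricting the induced algebra endomorphism of the exterior algebra. -/
noncomputable def extPowMap (k : Type) [Field k] (V : Type) [AddCommGroup V] [Module k V]
    (n : ℕ) (φ : V →ₗ[k] V) : ⋀[k]^n V →ₗ[k] ⋀[k]^n V :=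
  LinearMap.restrict (ExteriorAlgebra.map φ).toLinearMap
    (p := ⋀[k]^n V) (q := ⋀[k]^n V)
    (by
      intro x hx
      have hle : Submodule.map (ExteriorAlgebra.map φ).toLinearMap
          (LinearMap.range (ExteriorAlgebra.ι k (M := V)) ^ n) ≤
          LinearMap.range (ExteriorAlgebra.ι k (M := V)) ^ n := by
        rw [Submodule.map_pow]
        refine pow_le_pow_left' ?_ n
        rintro y ⟨z, ⟨v, rfl⟩, rfl⟩
        exact ⟨φ v, (ExteriorAlgebra.map_apply_ι φ v).symm⟩
      exact hle ⟨x, hx, rfl⟩)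



variable {R : Type*} [CommRing R] {m : ℕ}

/-- principal minor of `A` on the set `S` (indexed by the subtype). -/
noncomputable def pminor (A : Matrix (Fin m) (Fin m) R) (S : Finset (Fin m)) : R :=
  (A.submatrix (fun i : {x // x ∈ S} => (i : Fin m)) (fun j : {x // x ∈ S} => (j : Fin m))).det

theorem det_one_add_smul_eq_sum_pminor (t : R) (A : Matrix (Fin m) (Fin m) R) :
    (1 + t • A).det = ∑ S : Finset (Fin m), t ^ S.card * pminor A S := by
  classical
  have h1 : (1 + t • A : Matrix (Fin m) (Fin m) R) =
      Matrix.of ((fun i => t • A i) + (fun i => (1 : Matrix (Fin m) (Fin m) R) i)) := by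
    ext i j; simp [add_comm, Matrix.add_apply, Matrix.smul_apply]
  rw [h1, show (Matrix.of ((fun i => t • A i) + fun i => (1 : Matrix (Fin m) (Fin m) R) i)).det = Matrix.detRowAlternating (Matrix.of ((fun i => t • A i) + fun i => (1 : Matrix (Fin m) (Fin m) R) i)) from rfl]
  rw [show (Matrix.detRowAlternating (Matrix.of ((fun i => t • A i) + fun i => (1 : Matrix (Fin m) (Fin m) R) i)) : R) =
      Matrix.detRowAlternating.toMultilinearMap ((fun i => t • A i) + fun i => (1 : Matrix (Fin m) (Fin m) R) i) from rfl]
  rw [MultilinearMap.map_add_univ]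
  refine Finset.sum_congr rfl fun S _ => ?_
  set g : Fin m → Fin m → R := S.piecewise A (fun i => (1 : Matrix (Fin m) (Fin m) R) i) with hg
  have hpc : S.piecewise (fun i => t • A i) (fun i => (1 : Matrix (Fin m) (Fin m) R) i) =
      S.piecewise (fun i => (fun _ : Fin m => t) i • g i) g := by
    ext i j
    by_cases hi : i ∈ S
    · simp [g, Finset.piecewise, hi]
    · simp [g, Finset.piecewise, hi]
  rw [hpc, MultilinearMap.map_piecewise_smul]
  simp only [Finset.prod_const, smul_eq_mul]
  congr 1
  -- now: detRowAlternating g = pminor A S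
  show (Matrix.of g).det = pminor A S
  have e := Equiv.sumCompl (fun x : Fin m => x ∈ S)
  rw [← Matrix.det_submatrix_equiv_self (Equiv.sumCompl (fun x : Fin m => x ∈ S)) (Matrix.of g)]
  have hblock : (Matrix.of g).submatrix (Equiv.sumCompl (fun x : Fin m => x ∈ S))
      (Equiv.sumCompl (fun x : Fin m => x ∈ S)) =
      Matrix.fromBlocks
        (A.submatrix (fun i : {x // x ∈ S} => (i : Fin m)) (fun j : {x // x ∈ S} => (j : Fin m)))
        (A.submatrix (fun i : {x // x ∈ S} => (i : Fin m)) (fun j : {x // ¬ x ∈ S} => (j : Fin m)))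
        0 1 := by
    ext i j
    rcases i with i | i <;> rcases j with j | j <;>
      simp only [Matrix.submatrix_apply, Equiv.sumCompl_apply_inl, Equiv.sumCompl_apply_inr,
        Matrix.fromBlocks_apply₁₁, Matrix.fromBlocks_apply₁₂, Matrix.fromBlocks_apply₂₁,
        Matrix.fromBlocks_apply₂₂, Matrix.of_apply]
    · rw [hg]; exact congrFun (Finset.piecewise_eq_of_mem _ _ _ i.2) _
    · rw [hg]; exact congrFun (Finset.piecewise_eq_of_mem _ _ _ i.2) _
    · simp only [hg, Finset.piecewise, if_neg i.2]
      simp [Matrix.one_apply, Matrix.zero_apply]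
      intro h; exact absurd (h ▸ j.2) i.2
    · simp only [hg, Finset.piecewise, if_neg i.2]
      simp [Matrix.one_apply, Subtype.ext_iff]
  rw [hblock, Matrix.det_fromBlocks_zero₂₁, Matrix.det_one, mul_one, pminor]


open ExteriorAlgebra

namespace ExtAux

variable {k : Type} [Field k] {V : Type} [AddCommGroup V] [Module k V]
variable {m : ℕ} (b : Module.Basis (Fin m) k V) (n : ℕ)

/-- The `i`-th element (in increasing order) of the finset `s`. -/
noncomputable def idx (s : {s : Finset (Fin m) // s.card = n}) (i : Fin n) : Fin m :=
  (Finset.orderIsoOfFin s.1 s.2 i : Fin m)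

lemma idx_mem (s : {s : Finset (Fin m) // s.card = n}) (i : Fin n) : idx n s i ∈ s.1 :=
  (Finset.orderIsoOfFin s.1 s.2 i).2

lemma idx_injective (s : {s : Finset (Fin m) // s.card = n}) :
    Function.Injective (idx n s) := fun i j h =>
  (Finset.orderIsoOfFin s.1 s.2).injective (Subtype.ext h)

/-- Wedge of basis vectors indexed by `s`, as an element of `⋀[k]^n V`. -/
noncomputable def wedge (s : {s : Finset (Fin m) // s.card = n}) : ⋀[k]^n V :=
  ⟨ιMulti k n (fun i => b (idx n s i)), ιMulti_range k n (Set.mem_range_self _)⟩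

/-- Dual alternating map: determinant of coordinates along `s`. -/
noncomputable def dualAlt (s : {s : Finset (Fin m) // s.card = n}) : V [⋀^Fin n]→ₗ[k] k :=
  Matrix.detRowAlternating.compLinearMap (LinearMap.pi fun j : Fin n => b.coord (idx n s j))

lemma dualAlt_apply (s : {s : Finset (Fin m) // s.card = n}) (v : Fin n → V) :
    dualAlt b n s v = (Matrix.of fun i j : Fin n => b.repr (v i) (idx n s j)).det := rfl

/-- Dual linear functional on the exterior algebra. -/
noncomputable def lam (s : {s : Finset (Fin m) // s.card = n}) :
    ExteriorAlgebra k V →ₗ[k] k :=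
  liftAlternating (Function.update 0 n (dualAlt b n s))

lemma lam_ιMulti (s : {s : Finset (Fin m) // s.card = n}) (v : Fin n → V) :
    lam b n s (ιMulti k n v) = dualAlt b n s v := by
  rw [lam, liftAlternating_apply_ιMulti, Function.update_self]

lemma dualAlt_wedge (s t : {s : Finset (Fin m) // s.card = n}) :
    dualAlt b n s (fun i => b (idx n t i)) = if s = t then 1 else 0 := by
  classical
  rw [dualAlt_apply]
  have hent : ∀ i j, b.repr (b (idx n t i)) (idx n s j) =
      if idx n t i = idx n s j then (1 : k) else 0 := by
    intro i j; rw [Module.Basis.repr_self, Finsupp.single_apply]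
  split_ifs with h
  · subst h
    have : (Matrix.of fun i j : Fin n => b.repr (b (idx n s i)) (idx n s j)) = 1 := by
      ext i j
      rw [Matrix.of_apply, hent, Matrix.one_apply]
      simp only [(idx_injective n s).eq_iff]
    rw [this, Matrix.det_one]
  · -- s ≠ t: some element of t is not in s
    have hsub : ¬ t.1 ⊆ s.1 := by
      intro hsub
      exact h (Subtype.ext (Finset.eq_of_subset_of_card_le hsub (by rw [s.2, t.2])).symm)
    obtain ⟨x, hxt, hxs⟩ := Set.not_subset.1 (by exact_mod_cast hsub)
    obtain ⟨i, hi⟩ := (Finset.orderIsoOfFin t.1 t.2).surjective ⟨x, hxt⟩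
    have hrow : ∀ j, (Matrix.of fun i j : Fin n => b.repr (b (idx n t i)) (idx n s j)) i j = 0 := by
      intro j
      rw [Matrix.of_apply, hent, if_neg]
      intro hEq
      apply hxs
      have : idx n t i = x := congrArg Subtype.val hi
      rw [← this, hEq]
      exact idx_mem n s j
    exact Matrix.det_eq_zero_of_row_eq_zero i hrow

lemma lam_wedge (s t : {s : Finset (Fin m) // s.card = n}) :
    lam b n s ((wedge b n t : ⋀[k]^n V) : ExteriorAlgebra k V) = if s = t then 1 else 0 := by
  rw [wedge, lam_ιMulti, dualAlt_wedge]

lemma ιMulti_basis_mem_span (r : Fin n → Fin m) :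
    ιMulti k n (fun i => b (r i)) ∈
      Submodule.span k (Set.range fun s : {s : Finset (Fin m) // s.card = n} =>
        ((wedge b n s : ⋀[k]^n V) : ExteriorAlgebra k V)) := by
  classical
  by_cases hr : Function.Injective r
  · set s : Finset (Fin m) := Finset.univ.image r with hs
    have hcard : s.card = n := by
      rw [hs, Finset.card_image_of_injective _ hr, Finset.card_univ, Fintype.card_fin]
    set S : {s : Finset (Fin m) // s.card = n} := ⟨s, hcard⟩ with hS
    have hmem : ∀ i, r i ∈ s := fun i => Finset.mem_image_of_mem r (Finset.mem_univ i)
    set σ : Fin n → Fin n := fun i => (Finset.orderIsoOfFin s hcard).symm ⟨r i, hmem i⟩ with hσ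
    have hσinj : Function.Injective σ := by
      intro i j hij
      apply hr
      have h2 : (⟨r i, hmem i⟩ : {x // x ∈ s}) = ⟨r j, hmem j⟩ := by
        have h3 := congrArg (Finset.orderIsoOfFin s hcard) hij
        simpa only [hσ, OrderIso.apply_symm_apply] using h3
      exact congrArg Subtype.val h2
    let π : Equiv.Perm (Fin n) := Equiv.ofBijective σ ((Finite.injective_iff_bijective).1 hσinj)
    have hcomp : (fun i => b (r i)) = (fun i => b (idx n S i)) ∘ π := by
      funext i
      simp only [Function.comp_apply]
      congr 1
      show r i = idx n S (σ i)
      rw [hσ, idx]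
      exact congrArg Subtype.val ((Finset.orderIsoOfFin s hcard).apply_symm_apply ⟨r i, hmem i⟩).symm
    rw [hcomp, AlternatingMap.map_perm]
    rcases Int.units_eq_one_or (Equiv.Perm.sign π) with h1 | h1 <;> rw [h1]
    · rw [one_smul]
      exact Submodule.subset_span (Set.mem_range_self S)
    · rw [Units.neg_smul, one_smul]
      exact Submodule.neg_mem _ (Submodule.subset_span (Set.mem_range_self S))
  · rw [AlternatingMap.map_eq_zero_of_not_injective (ιMulti k n) (fun i => b (r i))
      (fun hinj => hr (Function.Injective.of_comp (f := b) hinj))]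
    exact Submodule.zero_mem _

lemma exteriorPower_le_span :
    (⋀[k]^n V : Submodule k (ExteriorAlgebra k V)) ≤
      Submodule.span k (Set.range fun s : {s : Finset (Fin m) // s.card = n} =>
        ((wedge b n s : ⋀[k]^n V) : ExteriorAlgebra k V)) := by
  classical
  refine le_trans (le_of_eq (ιMulti_span_fixedDegree k n).symm) (Submodule.span_le.2 ?_)
  rintro _ ⟨v, rfl⟩
  have hv : ιMulti k n v = ιMulti k n (fun i => ∑ j : Fin m, b.repr (v i) j • b j) := by
    congr 1; funext i; rw [Module.Basis.sum_repr]
  rw [hv]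
  rw [show (ιMulti k n (fun i => ∑ j : Fin m, b.repr (v i) j • b j) : ExteriorAlgebra k V) =
    (ιMulti k n (M := V)).toMultilinearMap (fun i => ∑ j : Fin m, b.repr (v i) j • b j) from rfl]
  rw [MultilinearMap.map_sum]
  refine Submodule.sum_mem _ fun r _ => ?_
  rw [MultilinearMap.map_smul_univ]
  exact Submodule.smul_mem _ _ (ιMulti_basis_mem_span b n r)

lemma span_wedge_eq_top :
    Submodule.span k (Set.range (wedge b n)) = (⊤ : Submodule k (⋀[k]^n V)) := by
  rw [eq_top_iff]
  rintro ⟨x, hx⟩ -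
  have h1 := exteriorPower_le_span b n hx
  have h2 : (Set.range fun s : {s : Finset (Fin m) // s.card = n} =>
      ((wedge b n s : ⋀[k]^n V) : ExteriorAlgebra k V)) =
      (⋀[k]^n V).subtype '' Set.range (wedge b n) := by
    rw [← Set.range_comp]; rfl
  rw [h2, ← Submodule.map_span] at h1
  obtain ⟨y, hy, hyx⟩ := h1
  have : y = ⟨x, hx⟩ := Subtype.ext hyx
  rwa [← this]

lemma linearIndependent_wedge : LinearIndependent k (wedge b n) := by
  classical
  rw [Fintype.linearIndependent_iff]
  intro g hg t
  have h1 : ((∑ s, g s • wedge b n s : ⋀[k]^n V) : ExteriorAlgebra k V) = 0 := by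
    rw [hg]; rfl
  rw [Submodule.coe_sum] at h1
  have h2 := congrArg (lam b n t) h1
  rw [map_sum, map_zero] at h2
  simp only [Submodule.coe_smul, map_smul, lam_wedge, smul_eq_mul] at h2
  rw [Finset.sum_eq_single t (by intro s _ hst; rw [if_neg (Ne.symm hst), mul_zero])
    (by intro h; exact absurd (Finset.mem_univ t) h)] at h2
  rwa [if_pos rfl, mul_one] at h2

/-- Basis of the `n`-th exterior power indexed by `n`-element subsets. -/
noncomputable def extBasis : Module.Basis {s : Finset (Fin m) // s.card = n} k (⋀[k]^n V) :=
  Module.Basis.mk (linearIndependent_wedge b n) (by rw [span_wedge_eq_top b n])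

lemma extBasis_repr (x : ⋀[k]^n V) (t : {s : Finset (Fin m) // s.card = n}) :
    (extBasis b n).repr x t = lam b n t ((x : ⋀[k]^n V) : ExteriorAlgebra k V) := by
  classical
  conv_rhs => rw [← Module.Basis.sum_repr (extBasis b n) x]
  rw [Submodule.coe_sum, map_sum]
  simp only [Submodule.coe_smul, map_smul, extBasis, Module.Basis.mk_apply, lam_wedge, smul_eq_mul]
  rw [Finset.sum_eq_single t (by intro s _ hst; rw [if_neg (Ne.symm hst), mul_zero])
    (by intro h; exact absurd (Finset.mem_univ t) h)]
  rw [if_pos rfl, mul_one]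

end ExtAux


namespace ExtAux

variable {k : Type} [Field k] {V : Type} [AddCommGroup V] [Module k V]
variable {m : ℕ} (b : Module.Basis (Fin m) k V) (n : ℕ)

lemma extBasis_apply (s : {s : Finset (Fin m) // s.card = n}) :
    extBasis b n s = wedge b n s := Module.Basis.mk_apply _ _ _

lemma trace_extPow (φ : V →ₗ[k] V) :
    LinearMap.trace k (⋀[k]^n V) (extPowMap k V n φ) =
      ∑ s : {s : Finset (Fin m) // s.card = n},
        (Matrix.of fun i j : Fin n => b.repr (φ (b (idx n s i))) (idx n s j)).det := by
  classical
  rw [LinearMap.trace_eq_matrix_trace k (extBasis b n)]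
  simp only [Matrix.trace, Matrix.diag]
  refine Finset.sum_congr rfl fun s _ => ?_
  rw [LinearMap.toMatrix_apply, extBasis_apply, extBasis_repr]
  have h1 : ((extPowMap k V n φ (wedge b n s) : ⋀[k]^n V) : ExteriorAlgebra k V) =
      ExteriorAlgebra.map φ ((wedge b n s : ⋀[k]^n V) : ExteriorAlgebra k V) := by
    rw [extPowMap, LinearMap.restrict_coe_apply]; rfl
  rw [h1, wedge]
  rw [show (ExteriorAlgebra.map φ (ιMulti k n fun i => b (idx n s i)) : ExteriorAlgebra k V) =
    ιMulti k n (φ ∘ fun i => b (idx n s i)) from map_apply_ιMulti φ _]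
  rw [lam_ιMulti, dualAlt_apply]
  rfl

end ExtAux

/-- for an endomorphism `φ` of an `m`-dimensional vector space `V` over a field `k`,
`∑_{n=0}^{m} tr(Λ^n φ)·T^n = det(1 + T·φ)` in `k[T]`, where `det(1 + T·φ)` is the determinant of
the endomorphism `1 + T·φ` of `V ⊗ k[T]`. -/
theorem stmt_3 (k V : Type) [Field k] [AddCommGroup V] [Module k V] [FiniteDimensional k V]
    (φ : V →ₗ[k] V) :
    ∑ n ∈ Finset.range (Module.finrank k V + 1),
        Polynomial.C (LinearMap.trace k (⋀[k]^n V) (extPowMap k V n φ)) * Polynomial.X ^ n =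
      LinearMap.det (1 + (Polynomial.X : Polynomial k) • LinearMap.baseChange (Polynomial k) φ) := by
  classical
  set mm := Module.finrank k V with hmm
  let b : Module.Basis (Fin mm) k V := Module.finBasis k V
  set A : Matrix (Fin mm) (Fin mm) k := LinearMap.toMatrix b b φ with hA
  -- determinants of principal blocks indexed by `Fin n` equal `pminor`
  have hdet : ∀ (n : ℕ) (s : {s : Finset (Fin mm) // s.card = n}),
      (Matrix.of fun i j : Fin n =>
          b.repr (φ (b (ExtAux.idx n s i))) (ExtAux.idx n s j)).det = pminor A s.1 := by
    intro n s
    have h1 : (Matrix.of fun i j : Fin n =>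
        b.repr (φ (b (ExtAux.idx n s i))) (ExtAux.idx n s j))
        = (A.submatrix (ExtAux.idx n s) (ExtAux.idx n s))ᵀ := by
      ext i j
      simp [hA, LinearMap.toMatrix_apply, Matrix.transpose_apply, Matrix.submatrix_apply]
    rw [h1, Matrix.det_transpose, pminor,
      ← Matrix.det_submatrix_equiv_self (Finset.orderIsoOfFin s.1 s.2).toEquiv]
    congr 1
  -- right-hand side
  let B := Algebra.TensorProduct.basis (Polynomial k) b
  rw [← LinearMap.det_toMatrix B]
  have hM : LinearMap.toMatrix B B (1 + (X : Polynomial k) • φ.baseChange (Polynomial k)) =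
      1 + (X : Polynomial k) • A.map (algebraMap k (Polynomial k)) := by
    have hbc : LinearMap.toMatrix B B (φ.baseChange (Polynomial k)) =
        A.map (algebraMap k (Polynomial k)) := LinearMap.toMatrix_baseChange (Polynomial k) φ b b
    simp only [map_add, _root_.map_smul, LinearMap.toMatrix_one, hbc]
  rw [hM, det_one_add_smul_eq_sum_pminor]
  have hpm : ∀ S : Finset (Fin mm),
      pminor (A.map (algebraMap k (Polynomial k))) S = Polynomial.C (pminor A S) := by
    intro S
    rw [pminor, pminor, Matrix.submatrix_map, Polynomial.algebraMap_eq,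
      ← RingHom.mapMatrix_apply, ← RingHom.map_det]
  simp only [hpm]
  -- regroup the right-hand side by cardinality
  have hcard : ∀ S : Finset (Fin mm), S ∈ Finset.univ →
      S.card ∈ Finset.range (mm + 1) := by
    intro S _
    rw [Finset.mem_range, Nat.lt_succ_iff]
    simpa using Finset.card_le_univ S
  rw [← Finset.sum_fiberwise_of_maps_to hcard
    (fun S => (X : Polynomial k) ^ S.card * Polynomial.C (pminor A S))]
  refine Finset.sum_congr rfl fun n hn => ?_
  have hinner : ∑ S ∈ Finset.univ.filter (fun S : Finset (Fin mm) => S.card = n),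
      (X : Polynomial k) ^ S.card * Polynomial.C (pminor A S)
      = (∑ S ∈ Finset.univ.filter (fun S : Finset (Fin mm) => S.card = n),
          Polynomial.C (pminor A S)) * X ^ n := by
    rw [Finset.sum_mul]
    refine Finset.sum_congr rfl fun S hS => ?_
    rw [(Finset.mem_filter.1 hS).2, mul_comm]
  rw [hinner, ← map_sum]
  congr 2
  -- trace = sum of principal minors
  rw [ExtAux.trace_extPow b n φ]
  rw [Finset.sum_subtype (p := fun S : Finset (Fin mm) => S.card = n)
    (Finset.univ.filter (fun S : Finset (Fin mm) => S.card = n))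
    (fun S => by simp [Finset.mem_filter]) (fun S => pminor A S)]
  exact Finset.sum_congr rfl fun s _ => hdet n s
end

section
/- Let q be a prime power and F_q the field with q elements. For n ≥ 2, the number of pairs (x, y) of elements of the ideal (t) in F_q[t]/(t^{n+1}) satisfying x·y = t^n in F_q[t]/(t^{n+1}) equals (n−1)(q−1)q^n. -/
open Polynomial

/-- The truncated polynomial ring `F[t]/(t^{n+1})`. -/
abbrev TruncPoly (F : Type) [Field F] (n : ℕ) : Type :=
  Polynomial F ⧸ Ideal.span {(Polynomial.X : Polynomial F) ^ (n + 1)}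

/-- The image of `t` in `F[t]/(t^{n+1})`. -/
noncomputable def tbar (F : Type) [Field F] (n : ℕ) : TruncPoly F n :=
  Ideal.Quotient.mk _ Polynomial.X

namespace Stmt7
variable {F : Type} [Field F] {n : ℕ}

noncomputable def mk' (F : Type) [Field F] (n : ℕ) : Polynomial F →+* TruncPoly F n :=
  AdjoinRoot.mk _

lemma hg : ((X : Polynomial F) ^ (n+1)).Monic := monic_X_pow _

noncomputable def coord (k : ℕ) (z : TruncPoly F n) : F :=
  (AdjoinRoot.modByMonicHom (hg (F := F) (n := n)) z).coeff k

lemma mk'_surjective : Function.Surjective (mk' F n) := AdjoinRoot.mk_surjective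

lemma tbar_eq : tbar F n = mk' F n X := rfl

lemma tbar_pow (m : ℕ) : tbar F n ^ m = mk' F n (X ^ m) := by
  rw [tbar_eq, map_pow]

lemma coord_mk (k : ℕ) (hk : k ≤ n) (p : Polynomial F) :
    coord k (mk' F n p) = p.coeff k := by
  unfold coord mk'
  erw [AdjoinRoot.modByMonicHom_mk]
  conv_rhs => rw [← modByMonic_add_div p (X ^ (n+1))]
  rw [coeff_add, show ((X:Polynomial F)^(n+1) * (p /ₘ X^(n+1))) = (p /ₘ X^(n+1)) * X^(n+1) by ring,
    coeff_mul_X_pow']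
  simp [not_le.mpr (Nat.lt_succ_iff.mpr hk)]

lemma coord_add (k : ℕ) (z w : TruncPoly F n) :
    coord k (z + w) = coord k z + coord k w := by
  unfold coord; erw [map_add]; rw [coeff_add]

lemma coord_sub (k : ℕ) (z w : TruncPoly F n) :
    coord k (z - w) = coord k z - coord k w := by
  unfold coord; erw [map_sub]; rw [coeff_sub]

lemma ext_coord {z w : TruncPoly F n} (h : ∀ k ≤ n, coord k z = coord k w) : z = w := by
  have hz := AdjoinRoot.mk_leftInverse (hg (F := F) (n := n)) z
  have hw := AdjoinRoot.mk_leftInverse (hg (F := F) (n := n)) w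
  rw [← hz, ← hw]
  congr 1
  ext k
  rcases le_or_gt k n with hk | hk
  · exact h k hk
  · obtain ⟨p, rfl⟩ := mk'_surjective (n := n) z
    obtain ⟨q, rfl⟩ := mk'_surjective (n := n) w
    have d1 : ((AdjoinRoot.modByMonicHom (hg (F := F) (n := n))) (mk' F n p)).degree <
        ((X : Polynomial F) ^ (n+1)).degree := by
      erw [AdjoinRoot.modByMonicHom_mk]
      exact degree_modByMonic_lt _ hg
    have d2 : ((AdjoinRoot.modByMonicHom (hg (F := F) (n := n))) (mk' F n q)).degree <
        ((X : Polynomial F) ^ (n+1)).degree := by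
      erw [AdjoinRoot.modByMonicHom_mk]
      exact degree_modByMonic_lt _ hg
    rw [degree_X_pow] at d1 d2
    rw [coeff_eq_zero_of_degree_lt (lt_of_lt_of_le d1 (by exact_mod_cast Nat.succ_le_of_lt hk)),
        coeff_eq_zero_of_degree_lt (lt_of_lt_of_le d2 (by exact_mod_cast Nat.succ_le_of_lt hk))]

lemma coord_pow_mul (k m : ℕ) (hk : k ≤ n) (w : TruncPoly F n) :
    coord k (tbar F n ^ m * w) = if m ≤ k then coord (k - m) w else 0 := by
  obtain ⟨p, rfl⟩ := mk'_surjective (n := n) w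
  rw [tbar_pow, ← map_mul, coord_mk k hk, coord_mk _ (le_trans (Nat.sub_le _ _) hk), mul_comm,
    coeff_mul_X_pow']

lemma tbar_pow_eq_zero : tbar F n ^ (n+1) = 0 := by
  rw [tbar_pow]; exact AdjoinRoot.mk_self

lemma mem_span_iff {z : TruncPoly F n} :
    z ∈ Ideal.span {tbar F n} ↔ coord 0 z = 0 := by
  rw [Ideal.mem_span_singleton]
  constructor
  · rintro ⟨w, rfl⟩
    have := coord_pow_mul 0 1 (Nat.zero_le n) w
    simpa using this
  · intro h
    obtain ⟨p, rfl⟩ := mk'_surjective (n := n) z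
    rw [coord_mk 0 (Nat.zero_le n)] at h
    obtain ⟨q, rfl⟩ := X_dvd_iff.mpr h
    exact ⟨mk' F n q, by rw [tbar_eq, ← map_mul]⟩

lemma nilpotent_of_mem_span {z : TruncPoly F n} (hz : z ∈ Ideal.span {tbar F n}) :
    IsNilpotent z := by
  obtain ⟨w, rfl⟩ := Ideal.mem_span_singleton.mp hz
  exact ⟨n+1, by rw [mul_pow, tbar_pow_eq_zero, zero_mul]⟩

lemma isUnit_of_coord_zero {z : TruncPoly F n} (h : coord 0 z ≠ 0) : IsUnit z := by
  set c : F := coord 0 z with hc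
  have h1 : z - algebraMap F (TruncPoly F n) c ∈ Ideal.span {tbar F n} := by
    rw [mem_span_iff, coord_sub]
    have : algebraMap F (TruncPoly F n) c = mk' F n (C c) := rfl
    rw [this, coord_mk 0 (Nat.zero_le n), coeff_C]
    simp [hc]
  have h2 : IsUnit (algebraMap F (TruncPoly F n) c) :=
    (isUnit_iff_ne_zero.mpr h).map (algebraMap F (TruncPoly F n))
  have := (nilpotent_of_mem_span h1).isUnit_add_right_of_commute h2 (Commute.all _ _)
  simpa using this

/-- polynomial with coefficients `f 0, ..., f (m-1)`. -/
noncomputable def polyOf (m : ℕ) (f : ℕ → F) : Polynomial F :=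
  ∑ j ∈ Finset.range m, C (f j) * X ^ j

lemma polyOf_coeff (m : ℕ) (f : ℕ → F) (k : ℕ) :
    (polyOf m f).coeff k = if k < m then f k else 0 := by
  unfold polyOf
  rw [finset_sum_coeff]
  simp_rw [coeff_C_mul, coeff_X_pow]
  by_cases hk : k < m
  · rw [Finset.sum_eq_single k (fun b _ hb => by rw [if_neg (Ne.symm hb), mul_zero])
      (fun h => absurd (Finset.mem_range.mpr hk) h), if_pos rfl, if_pos hk, mul_one]
  · rw [if_neg hk, Finset.sum_eq_zero]
    intro b hb
    rw [if_neg (by rw [Finset.mem_range] at hb; omega), mul_zero]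

lemma coord_zero (k : ℕ) : coord k (0 : TruncPoly F n) = 0 := by
  unfold coord; erw [map_zero]; rw [coeff_zero]

lemma coord_gt {k : ℕ} (hk : n < k) (z : TruncPoly F n) : coord k z = 0 := by
  obtain ⟨p, rfl⟩ := mk'_surjective (n := n) z
  have d1 : ((AdjoinRoot.modByMonicHom (hg (F := F) (n := n))) (mk' F n p)).degree <
      ((X : Polynomial F) ^ (n+1)).degree := by
    erw [AdjoinRoot.modByMonicHom_mk]
    exact degree_modByMonic_lt _ hg
  rw [degree_X_pow] at d1
  exact coeff_eq_zero_of_degree_lt (lt_of_lt_of_le d1 (by exact_mod_cast Nat.succ_le_of_lt hk))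

/-- the "unit part" polynomial: constant term `c`, then `f 0, f 1, ...` up to degree `n-1-a`. -/
noncomputable def upoly (n a : ℕ) (c : F) (f : ℕ → F) : Polynomial F :=
  C c + X * polyOf (n - 1 - a) f

lemma upoly_coeff_zero (n a : ℕ) (c : F) (f : ℕ → F) : (upoly n a c f).coeff 0 = c := by
  unfold upoly
  rw [coeff_add, mul_coeff_zero, coeff_X_zero, zero_mul, add_zero, coeff_C, if_pos rfl]

lemma upoly_coeff_succ (n a : ℕ) (c : F) (f : ℕ → F) (k : ℕ) :
    (upoly n a c f).coeff (k + 1) = if k < n - 1 - a then f k else 0 := by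
  unfold upoly
  rw [coeff_add, coeff_C, if_neg (Nat.succ_ne_zero k), zero_add, coeff_X_mul, polyOf_coeff]

/-- the "free part" polynomial for `y`: coefficients `f (n-1-a), ..., f (n-1)` at
positions `n-a, ..., n`. -/
noncomputable def ypoly (n a : ℕ) (f : ℕ → F) : Polynomial F :=
  X ^ (n - a) * polyOf (a + 1) (fun j => f (n - 1 - a + j))

lemma ypoly_coeff (n a : ℕ) (ha : a + 1 ≤ n) (f : ℕ → F) (k : ℕ) :
    (ypoly n a f).coeff k = if n - a ≤ k ∧ k ≤ n then f (k - 1) else 0 := by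
  unfold ypoly
  rw [mul_comm, coeff_mul_X_pow', polyOf_coeff]
  by_cases h1 : n - a ≤ k
  · rw [if_pos h1]
    by_cases h2 : k ≤ n
    · rw [if_pos (show k - (n - a) < a + 1 by omega), if_pos ⟨h1, h2⟩,
        congrArg f (by omega : n-1-a + (k-(n-a)) = k-1)]
    · rw [if_neg (show ¬(k - (n - a) < a + 1) by omega), if_neg (fun h => h2 h.2)]
  · rw [if_neg h1, if_neg (fun h => h1 h.1)]

noncomputable def uelt (F : Type) [Field F] (n a : ℕ) (c : F) (f : ℕ → F) : TruncPoly F n :=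
  mk' F n (upoly n a c f)

noncomputable def xelt (F : Type) [Field F] (n a : ℕ) (c : F) (f : ℕ → F) : TruncPoly F n :=
  tbar F n ^ (a + 1) * uelt F n a c f

noncomputable def yelt (F : Type) [Field F] (n a : ℕ) (c : F) (f : ℕ → F) : TruncPoly F n :=
  tbar F n ^ (n - 1 - a) * Ring.inverse (uelt F n a c f) + mk' F n (ypoly n a f)

lemma isUnit_uelt {a : ℕ} {c : F} (hc : c ≠ 0) (f : ℕ → F) : IsUnit (uelt F n a c f) := by
  apply isUnit_of_coord_zero
  rw [uelt, coord_mk 0 (Nat.zero_le n), upoly_coeff_zero]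
  exact hc

lemma coord_xelt {a : ℕ} {c : F} {f : ℕ → F} {k : ℕ} (hk : k ≤ n) :
    coord k (xelt F n a c f) =
      if a + 1 ≤ k then (upoly n a c f).coeff (k - (a+1)) else 0 := by
  rw [xelt, coord_pow_mul _ _ hk, uelt]
  split_ifs with h
  · exact coord_mk _ (le_trans (Nat.sub_le _ _) hk) _
  · rfl

lemma coord_yelt {a : ℕ} (ha : a + 1 ≤ n) {c : F} {f : ℕ → F} {k : ℕ} (hk : k ≤ n) :
    coord k (yelt F n a c f) =
      (if n - 1 - a ≤ k then coord (k - (n - 1 - a)) (Ring.inverse (uelt F n a c f)) else 0)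
      + if n - a ≤ k ∧ k ≤ n then f (k - 1) else 0 := by
  rw [yelt, coord_add, coord_pow_mul _ _ hk, coord_mk _ hk, ypoly_coeff n a ha]

lemma xelt_mul_yelt {a : ℕ} (ha : a + 2 ≤ n) {c : F} (hc : c ≠ 0) (f : ℕ → F) :
    xelt F n a c f * yelt F n a c f = tbar F n ^ n := by
  rw [xelt, yelt, mul_add]
  have h1 : tbar F n ^ (a + 1) * uelt F n a c f *
      (tbar F n ^ (n - 1 - a) * Ring.inverse (uelt F n a c f)) = tbar F n ^ n := by
    rw [show tbar F n ^ (a+1) * uelt F n a c f * (tbar F n ^ (n-1-a) * Ring.inverse (uelt F n a c f))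
        = (tbar F n ^ (a+1) * tbar F n ^ (n-1-a)) * (uelt F n a c f * Ring.inverse (uelt F n a c f))
        by ring, Ring.mul_inverse_cancel _ (isUnit_uelt hc f), mul_one, ← pow_add]
    congr 1
    omega
  have h2 : tbar F n ^ (a + 1) * uelt F n a c f * mk' F n (ypoly n a f) = 0 := by
    rw [ypoly, map_mul, ← tbar_pow,
      show tbar F n ^ (a+1) * uelt F n a c f * (tbar F n ^ (n-a) * mk' F n (polyOf (a+1) _))
        = (tbar F n ^ (a+1) * tbar F n ^ (n-a)) * (uelt F n a c f * mk' F n (polyOf (a+1) _))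
        by ring, ← pow_add, show a + 1 + (n - a) = n + 1 by omega, tbar_pow_eq_zero, zero_mul]
  rw [h1, h2, add_zero]

lemma polyOf_congr {m : ℕ} {f g : ℕ → F} (h : ∀ j < m, f j = g j) :
    polyOf m f = polyOf m g := by
  unfold polyOf
  exact Finset.sum_congr rfl fun j hj => by rw [h j (Finset.mem_range.mp hj)]

lemma xelt_mem (a : ℕ) (c : F) (f : ℕ → F) : xelt F n a c f ∈ Ideal.span {tbar F n} := by
  rw [mem_span_iff, coord_xelt (Nat.zero_le n), if_neg (by omega)]

lemma yelt_mem {a : ℕ} (ha : a + 2 ≤ n) (c : F) (f : ℕ → F) :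
    yelt F n a c f ∈ Ideal.span {tbar F n} := by
  rw [mem_span_iff, coord_yelt (by omega) (Nat.zero_le n), if_neg (by omega),
    if_neg (by omega), add_zero]

lemma uelt_congr (a : ℕ) (c : F) {f g : ℕ → F} (h : ∀ j < n - 1 - a, f j = g j) :
    uelt F n a c f = uelt F n a c g := by
  unfold uelt upoly
  rw [polyOf_congr h]

lemma xelt_congr (a : ℕ) (c : F) {f g : ℕ → F} (h : ∀ j < n - 1 - a, f j = g j) :
    xelt F n a c f = xelt F n a c g := by
  unfold xelt
  rw [uelt_congr a c h]

lemma yelt_congr {a : ℕ} (ha : a + 2 ≤ n) (c : F) {f g : ℕ → F} (h : ∀ j < n, f j = g j) :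
    yelt F n a c f = yelt F n a c g := by
  unfold yelt ypoly
  rw [uelt_congr a c (fun j hj => h j (by omega)),
    polyOf_congr (fun j hj => h _ (by omega))]

lemma inj {a1 a2 : ℕ} (h1 : a1 + 2 ≤ n) (h2 : a2 + 2 ≤ n) {c1 c2 : F}
    (hc1 : c1 ≠ 0) (hc2 : c2 ≠ 0) {f1 f2 : ℕ → F}
    (hx : xelt F n a1 c1 f1 = xelt F n a2 c2 f2)
    (hy : yelt F n a1 c1 f1 = yelt F n a2 c2 f2) :
    a1 = a2 ∧ c1 = c2 ∧ ∀ j < n, f1 j = f2 j := by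
  have key : ∀ (b1 b2 : ℕ), b1 + 2 ≤ n → b2 + 2 ≤ n → ∀ (d1 d2 : F), d1 ≠ 0 →
      ∀ (g1 g2 : ℕ → F), xelt F n b1 d1 g1 = xelt F n b2 d2 g2 → b1 < b2 → False := by
    intro b1 b2 hb1 hb2 d1 d2 hd1 g1 g2 hxe hlt
    have e := congrArg (coord (b1+1)) hxe
    rw [coord_xelt (by omega), coord_xelt (by omega), if_pos le_rfl, if_neg (by omega),
      Nat.sub_self, upoly_coeff_zero] at e
    exact hd1 e
  have ha : a1 = a2 := by
    rcases lt_trichotomy a1 a2 with h | h | h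
    · exact absurd (key a1 a2 h1 h2 c1 c2 hc1 f1 f2 hx h) id
    · exact h
    · exact absurd (key a2 a1 h2 h1 c2 c1 hc2 f2 f1 hx.symm h) id
  subst ha
  have hc : c1 = c2 := by
    have e := congrArg (coord (a1+1)) hx
    rw [coord_xelt (by omega), coord_xelt (by omega), if_pos le_rfl, if_pos le_rfl,
      Nat.sub_self, upoly_coeff_zero, upoly_coeff_zero] at e
    exact e
  subst hc
  have hflow : ∀ j < n - 1 - a1, f1 j = f2 j := by
    intro j hj
    have e := congrArg (coord (a1+2+j)) hx
    rw [coord_xelt (by omega), coord_xelt (by omega), if_pos (by omega), if_pos (by omega),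
      show a1+2+j - (a1+1) = j + 1 by omega, upoly_coeff_succ, upoly_coeff_succ,
      if_pos hj, if_pos hj] at e
    exact e
  have hu : uelt F n a1 c1 f1 = uelt F n a1 c1 f2 := uelt_congr a1 c1 hflow
  refine ⟨rfl, rfl, fun j hj => ?_⟩
  by_cases hjb : j < n - 1 - a1
  · exact hflow j hjb
  · have e := congrArg (coord (j+1)) hy
    rw [coord_yelt (by omega) (by omega), coord_yelt (by omega) (by omega), hu,
      if_pos (show n - 1 - a1 ≤ j + 1 by omega),
      if_pos (show n - a1 ≤ j + 1 ∧ j + 1 ≤ n by omega),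
      if_pos (show n - a1 ≤ j + 1 ∧ j + 1 ≤ n by omega), Nat.add_sub_cancel] at e
    exact add_left_cancel e

lemma surj (_hn : 2 ≤ n) (x y : TruncPoly F n) (hx : coord 0 x = 0) (hy : coord 0 y = 0)
    (hxy : x * y = tbar F n ^ n) :
    ∃ (a : ℕ) (c : F) (f : ℕ → F), a + 2 ≤ n ∧ c ≠ 0 ∧
      xelt F n a c f = x ∧ yelt F n a c f = y := by
  classical
  have htn : tbar F n ^ n ≠ 0 := by
    intro h0
    have e := congrArg (coord n) h0
    rw [tbar_pow, coord_mk n le_rfl, coeff_X_pow, if_pos rfl, coord_zero] at e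
    exact one_ne_zero e
  have hx0 : x ≠ 0 := by rintro rfl; rw [zero_mul] at hxy; exact htn hxy.symm
  have hex : ∃ k, coord k x ≠ 0 := by
    by_contra hco; push_neg at hco
    exact hx0 (ext_coord fun k _ => by rw [hco k, coord_zero])
  set m := Nat.find hex with hmdef
  have hm : coord m x ≠ 0 := Nat.find_spec hex
  have hmin : ∀ k < m, coord k x = 0 := fun k hk => by
    have := Nat.find_min hex hk
    simpa using this
  have hm1 : 1 ≤ m := by
    by_contra h
    exact hm (by rwa [show m = 0 by omega])
  have hmn : m ≤ n := by
    by_contra h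
    exact hm (coord_gt (by omega) x)
  set U := mk' F n (polyOf (n+1-m) (fun j => coord (m+j) x)) with hU
  have hxU : x = tbar F n ^ m * U := by
    apply ext_coord; intro k hk
    rw [coord_pow_mul k m hk, hU, coord_mk _ (le_trans (Nat.sub_le _ _) hk), polyOf_coeff]
    by_cases h : m ≤ k
    · rw [if_pos h, if_pos (by omega), show m + (k - m) = k by omega]
    · rw [if_neg h, hmin k (by omega)]
  have hUunit : IsUnit U := by
    apply isUnit_of_coord_zero
    rw [hU, coord_mk 0 (Nat.zero_le n), polyOf_coeff, if_pos (by omega)]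
    simpa using hm
  have hmn' : m + 1 ≤ n := by
    by_contra h
    have hmn2 : m = n := by omega
    obtain ⟨w, hw⟩ := Ideal.mem_span_singleton.mp (mem_span_iff.mpr hy)
    apply htn
    rw [← hxy, hxU, hmn2, hw,
      show tbar F n ^ n * U * (tbar F n * w) = tbar F n ^ (n+1) * (U * w) by ring,
      tbar_pow_eq_zero, zero_mul]
  set v := Ring.inverse U with hv
  set d := y - tbar F n ^ (n - m) * v with hd
  have h1 : tbar F n ^ m * U * d = 0 := by
    rw [← hxU, hd, mul_sub, hxy, hxU,
      show tbar F n ^ m * U * (tbar F n ^ (n-m) * v) =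
        tbar F n ^ m * tbar F n ^ (n-m) * (U * v) by ring,
      hv, Ring.mul_inverse_cancel _ hUunit, mul_one, ← pow_add,
      show m + (n-m) = n by omega, sub_self]
  have hxd : tbar F n ^ m * d = 0 := by
    have h2 : v * (tbar F n ^ m * U * d) = tbar F n ^ m * d := by
      rw [show v * (tbar F n ^ m * U * d) = U * v * (tbar F n ^ m * d) by ring, hv,
        Ring.mul_inverse_cancel _ hUunit, one_mul]
    rw [← h2, h1, mul_zero]
  have hdlow : ∀ k, k ≤ n - m → coord k d = 0 := by
    intro k hk
    have e := congrArg (coord (m+k)) hxd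
    rw [coord_pow_mul _ _ (by omega), if_pos (by omega), coord_zero,
      show m + k - m = k by omega] at e
    exact e
  set f : ℕ → F := fun j => if j < n - m then coord (m+1+j) x else coord (j+1) d with hf
  have hup : upoly n (m-1) (coord m x) f = polyOf (n+1-m) (fun j => coord (m+j) x) := by
    ext k
    cases k with
    | zero =>
      rw [upoly_coeff_zero, polyOf_coeff, if_pos (by omega), Nat.add_zero]
    | succ k =>
      rw [upoly_coeff_succ, polyOf_coeff]
      simp only [hf]
      by_cases h : k < n - m
      · rw [if_pos (show k < n - 1 - (m-1) by omega), if_pos h, if_pos (by omega),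
          show m + (k+1) = m+1+k by omega]
      · rw [if_neg (show ¬(k < n - 1 - (m-1)) by omega), if_neg (by omega)]
  refine ⟨m - 1, coord m x, f, by omega, hm, ?_, ?_⟩
  · rw [xelt, uelt, hup, ← hU, show m - 1 + 1 = m by omega, ← hxU]
  · rw [yelt, uelt, hup, ← hU, show n - 1 - (m-1) = n - m by omega, ← hv]
    have hyp : mk' F n (ypoly n (m-1) f) = d := by
      apply ext_coord; intro k hk
      rw [coord_mk _ hk, ypoly_coeff _ _ (by omega)]
      by_cases h : n - m + 1 ≤ k
      · rw [if_pos (show n - (m-1) ≤ k ∧ k ≤ n by omega)]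
        simp only [hf]
        rw [if_neg (show ¬(k - 1 < n - m) by omega), show k - 1 + 1 = k by omega]
      · rw [if_neg (show ¬(n - (m-1) ≤ k ∧ k ≤ n) by omega)]
        exact (hdlow k (by omega)).symm
    rw [hyp, hd]
    ring

end Stmt7

/-- for a finite field `F` with `q` elements and `n ≥ 2`, the number of pairs
`(x, y)` of elements of the ideal `(t)` of `F[t]/(t^{n+1})` with `x·y = tⁿ` equals
`(n-1)(q-1)qⁿ`. -/
theorem stmt_7 (F : Type) [Field F] [Fintype F] (n : ℕ) (hn : 2 ≤ n) :
    Nat.card {p : TruncPoly F n × TruncPoly F n //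
        p.1 ∈ Ideal.span {tbar F n} ∧ p.2 ∈ Ideal.span {tbar F n} ∧
        p.1 * p.2 = tbar F n ^ n} =
      (n - 1) * (Fintype.card F - 1) * Fintype.card F ^ n := by
  classical
  let fe : (Fin n → F) → ℕ → F := fun f j => if h : j < n then f ⟨j, h⟩ else 0
  have haf : ∀ a : Fin (n-1), (a : ℕ) + 2 ≤ n := fun a => by have := a.isLt; omega
  let Φ : (Fin (n-1) × Fˣ × (Fin n → F)) → {p : TruncPoly F n × TruncPoly F n //
        p.1 ∈ Ideal.span {tbar F n} ∧ p.2 ∈ Ideal.span {tbar F n} ∧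
        p.1 * p.2 = tbar F n ^ n} := fun q =>
    ⟨(Stmt7.xelt F n q.1 (q.2.1 : F) (fe q.2.2), Stmt7.yelt F n q.1 (q.2.1 : F) (fe q.2.2)),
      Stmt7.xelt_mem _ _ _, Stmt7.yelt_mem (haf q.1) _ _,
      Stmt7.xelt_mul_yelt (haf q.1) q.2.1.ne_zero _⟩
  have hB : Function.Bijective Φ := by
    constructor
    · rintro ⟨a1, c1, f1⟩ ⟨a2, c2, f2⟩ h
      have h' := congrArg Subtype.val h
      have hx := congrArg Prod.fst h'
      have hy := congrArg Prod.snd h'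
      obtain ⟨ha, hc, hfj⟩ := Stmt7.inj (haf a1) (haf a2) c1.ne_zero c2.ne_zero hx hy
      refine Prod.ext (Fin.ext ha) (Prod.ext (Units.ext hc) (funext fun j => ?_))
      have := hfj j j.isLt
      simpa only [fe, dif_pos j.isLt, Fin.eta] using this
    · rintro ⟨⟨x, y⟩, hx, hy, hxy⟩
      obtain ⟨a, c, f, ha, hc, hxe, hye⟩ := Stmt7.surj hn x y
        (Stmt7.mem_span_iff.mp hx) (Stmt7.mem_span_iff.mp hy) hxy
      have hfe : ∀ j < n, fe (fun j : Fin n => f j) j = f j := fun j hj => by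
        simp only [fe, dif_pos hj]
      refine ⟨⟨⟨a, by omega⟩, Units.mk0 c hc, fun j => f j⟩, ?_⟩
      apply Subtype.ext
      apply Prod.ext
      · exact (Stmt7.xelt_congr a c (fun j hj => hfe j (by omega))).trans hxe
      · exact (Stmt7.yelt_congr ha c hfe).trans hye
  rw [← Nat.card_congr (Equiv.ofBijective Φ hB), Nat.card_prod, Nat.card_prod,
    Nat.card_eq_fintype_card, Nat.card_eq_fintype_card, Nat.card_eq_fintype_card,
    Fintype.card_fin, Fintype.card_units, Fintype.card_fun, Fintype.card_fin, mul_assoc]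
end

section
/- Let k be a field, and let A ⊆ B be commutative k-algebras such that the quotient B/A is a finite-dimensional k-vector space. Let g ∈ A be an element which is a non-zerodivisor in B and such that B/gB is a finite-dimensional k-vector space. Then A/gA is finite-dimensional over k and dim_k(A/gA) = dim_k(B/gB). -/
set_option maxHeartbeats 1000000

/-- Auxiliary: a module is finite-dimensional if a submodule and the quotient by it are. -/
theorem aux_fd_of_sub_quot {k M : Type} [Field k] [AddCommGroup M] [Module k M]
    (p : Submodule k M) (h1 : FiniteDimensional k p) (h2 : FiniteDimensional k (M ⧸ p)) :
    FiniteDimensional k M := by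
  refine ⟨?_⟩
  apply Submodule.fg_of_fg_map_of_fg_inf_ker p.mkQ
  · rw [Submodule.map_top, Submodule.range_mkQ]
    exact h2.fg_top
  · rw [Submodule.ker_mkQ, top_inf_eq, ← Submodule.fg_top]
    exact h1.fg_top

/-- let `A ⊆ B` be commutative `k`-algebras with `B/A` finite-dimensional over
`k`, and let `g ∈ A` be a non-zerodivisor in `B` with `B/gB` finite-dimensional over `k`.
Then `A/gA` is finite-dimensional over `k` and `dim_k A/gA = dim_k B/gB`. -/
theorem stmt_11 (k : Type) [Field k] (B : Type) [CommRing B] [Algebra k B]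
    (A : Subalgebra k B) (g : A)
    (hBA : FiniteDimensional k (B ⧸ Subalgebra.toSubmodule A))
    (hreg : ∀ b : B, b * (g : B) = 0 → b = 0)
    (hBg : FiniteDimensional k (B ⧸ Ideal.span {(g : B)})) :
    FiniteDimensional k (A ⧸ Ideal.span {g}) ∧
      Module.finrank k (A ⧸ Ideal.span {g}) =
        Module.finrank k (B ⧸ Ideal.span {(g : B)}) := by
  classical
  set SA : Submodule k B := Subalgebra.toSubmodule A with hSAdef
  set gB : Submodule k B := (Ideal.span {(g : B)}).restrictScalars k with hgBdef
  set mg : B →ₗ[k] B := LinearMap.mulLeft k (g : B) with hmgdef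
  set SgA : Submodule k B := SA.map mg with hSgAdef
  -- basic membership facts
  have hmemSgA : ∀ x : B, x ∈ SgA ↔ ∃ a : A, (g : B) * (a : B) = x := by
    intro x
    constructor
    · rintro ⟨a, ha, rfl⟩
      exact ⟨⟨a, ha⟩, rfl⟩
    · rintro ⟨a, rfl⟩
      exact ⟨(a : B), a.2, rfl⟩
  have hgreg : ∀ x y : B, (g : B) * x = (g : B) * y → x = y := by
    intro x y h
    have h0 : (x - y) * (g : B) = 0 := by
      have : (g : B) * x - (g : B) * y = 0 := by rw [h, sub_self]
      calc (x - y) * (g : B) = (g : B) * x - (g : B) * y := by ring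
        _ = 0 := this
    exact sub_eq_zero.mp (hreg _ h0)
  -- the map b ↦ g*b mod gA
  set f : B →ₗ[k] B ⧸ SgA := SgA.mkQ.comp mg with hfdef
  have hkerf : LinearMap.ker f = SA := by
    ext b
    simp only [hfdef, LinearMap.mem_ker, LinearMap.comp_apply, Submodule.mkQ_apply,
      Submodule.Quotient.mk_eq_zero]
    constructor
    · intro h
      rw [hmemSgA] at h
      obtain ⟨a, ha⟩ := h
      have : (a : B) = b := hgreg _ _ (by rw [ha]; rfl)
      rw [← this]; exact a.2
    · intro hb
      rw [hmemSgA]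
      exact ⟨⟨b, hb⟩, rfl⟩
  have hrangef : LinearMap.range f = gB.map SgA.mkQ := by
    rw [hfdef, LinearMap.range_comp]
    congr 1
    ext x
    simp only [hgBdef, hmgdef, LinearMap.mem_range, LinearMap.mulLeft_apply,
      Submodule.restrictScalars_mem, Ideal.mem_span_singleton]
    constructor
    · rintro ⟨y, rfl⟩; exact Dvd.intro y rfl
    · rintro ⟨c, rfl⟩; exact ⟨c, rfl⟩
  have e1 : (B ⧸ SA) ≃ₗ[k] (gB.map SgA.mkQ) :=
    (Submodule.quotEquivOfEq SA (LinearMap.ker f) hkerf.symm).trans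
      (f.quotKerEquivRange.trans (LinearEquiv.ofEq _ _ hrangef))
  -- the map a ↦ a mod gA
  set f2 : A →ₗ[k] B ⧸ SgA := SgA.mkQ.comp (A.val.toLinearMap) with hf2def
  have hkerf2 : LinearMap.ker f2 = (Ideal.span {g}).restrictScalars k := by
    ext a
    simp only [hf2def, LinearMap.mem_ker, LinearMap.comp_apply, Submodule.mkQ_apply,
      Submodule.Quotient.mk_eq_zero, Submodule.restrictScalars_mem, Ideal.mem_span_singleton,
      AlgHom.toLinearMap_apply]
    rw [hmemSgA]
    constructor
    · rintro ⟨c, hc⟩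
      refine ⟨c, Subtype.ext ?_⟩
      show (a : B) = ((g * c : A) : B)
      push_cast
      exact hc.symm
    · rintro ⟨c, rfl⟩
      refine ⟨c, ?_⟩
      show (g : B) * (c : B) = ((g * c : A) : B)
      push_cast
      ring
  have hrangef2 : LinearMap.range f2 = SA.map SgA.mkQ := by
    rw [hf2def, LinearMap.range_comp]
    congr 1
    ext x
    simp only [LinearMap.mem_range, AlgHom.toLinearMap_apply]
    constructor
    · rintro ⟨a, rfl⟩; exact a.2
    · intro hx; exact ⟨⟨x, hx⟩, rfl⟩
  have e2 : (A ⧸ Ideal.span {g}) ≃ₗ[k] (SA.map SgA.mkQ) :=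
    ((Submodule.Quotient.restrictScalarsEquiv k (Ideal.span {g})).symm.trans
      ((Submodule.quotEquivOfEq _ _ hkerf2.symm).trans f2.quotKerEquivRange)).trans
      (LinearEquiv.ofEq _ _ hrangef2)
  have e3 : (B ⧸ gB) ≃ₗ[k] (B ⧸ Ideal.span {(g : B)}) :=
    Submodule.Quotient.restrictScalarsEquiv k (Ideal.span {(g : B)})
  -- inclusions
  have hle1 : SgA ≤ SA := by
    intro x hx
    rw [hmemSgA] at hx
    obtain ⟨a, rfl⟩ := hx
    exact A.mul_mem g.2 a.2
  have hle2 : SgA ≤ gB := by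
    intro x hx
    rw [hmemSgA] at hx
    obtain ⟨a, rfl⟩ := hx
    simp only [hgBdef, Submodule.restrictScalars_mem, Ideal.mem_span_singleton]
    exact Dvd.intro _ rfl
  have q1 := Submodule.quotientQuotientEquivQuotient SgA SA hle1
  have q2 := Submodule.quotientQuotientEquivQuotient SgA gB hle2
  -- finite dimensionality
  haveI hgBq : FiniteDimensional k (B ⧸ gB) := Module.Finite.equiv e3.symm
  haveI hfd1 : FiniteDimensional k (gB.map SgA.mkQ) := Module.Finite.equiv e1
  haveI hfdM : FiniteDimensional k (B ⧸ SgA) := by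
    refine aux_fd_of_sub_quot (gB.map SgA.mkQ) hfd1 ?_
    exact Module.Finite.equiv q2.symm
  haveI hfd2 : FiniteDimensional k (SA.map SgA.mkQ) := inferInstance
  haveI hAg : FiniteDimensional k (A ⧸ Ideal.span {g}) := Module.Finite.equiv e2.symm
  refine ⟨hAg, ?_⟩
  have eq1 := Submodule.finrank_quotient_add_finrank (SA.map SgA.mkQ)
  have eq2 := Submodule.finrank_quotient_add_finrank (gB.map SgA.mkQ)
  rw [q1.finrank_eq] at eq1
  rw [q2.finrank_eq] at eq2
  rw [← e2.finrank_eq] at eq1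
  rw [← e1.finrank_eq] at eq2
  rw [← e3.finrank_eq]
  omega
end

section
/- Let k be a field, R = k[[x,y]]/(xy), and let α, β ∈ k be nonzero scalars and a, b ≥ 1 integers. Then the principal ideal I = (α·x^a + β·y^b) of R contains x^{a+1} and y^{b+1}, and I equals the ideal generated by the three elements α·x^a + β·y^b, x^{a+1}, y^{b+1}; moreover dim_k R/I = a + b. -/
set_option synthInstance.maxHeartbeats 1000000
set_option maxHeartbeats 1000000
/-- The local ring `R = k[[x,y]]/(xy)` of the nodal plane curve singularity. -/
abbrev NodeRing (k : Type) [Field k] : Type :=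
  MvPowerSeries (Fin 2) k ⧸
    Ideal.span {(MvPowerSeries.X 0 : MvPowerSeries (Fin 2) k) * MvPowerSeries.X 1}

/-- The image of `x` in `k[[x,y]]/(xy)`. -/
noncomputable def nodeX (k : Type) [Field k] : NodeRing k :=
  Ideal.Quotient.mk _ (MvPowerSeries.X 0)

/-- The image of `y` in `k[[x,y]]/(xy)`. -/
noncomputable def nodeY (k : Type) [Field k] : NodeRing k :=
  Ideal.Quotient.mk _ (MvPowerSeries.X 1)

namespace Stmt13Aux

open MvPowerSeries

noncomputable section

variable {k : Type} [Field k]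

/-- the exponent of `x^n` -/
def xE (n : ℕ) : Fin 2 →₀ ℕ := Finsupp.single 0 n

/-- the exponent of `y^n` -/
def yE (n : ℕ) : Fin 2 →₀ ℕ := Finsupp.single 1 n

/-- the exponent of `xy` -/
def E : Fin 2 →₀ ℕ := xE 1 + yE 1

@[simp] lemma xE_apply0 (n : ℕ) : xE n 0 = n := Finsupp.single_eq_same
@[simp] lemma xE_apply1 (n : ℕ) : xE n 1 = 0 := Finsupp.single_eq_of_ne (by decide)
@[simp] lemma yE_apply0 (n : ℕ) : yE n 0 = 0 := Finsupp.single_eq_of_ne (by decide)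
@[simp] lemma yE_apply1 (n : ℕ) : yE n 1 = n := Finsupp.single_eq_same
@[simp] lemma E_apply0 : E 0 = 1 := by simp [E]
@[simp] lemma E_apply1 : E 1 = 1 := by simp [E]

lemma eq_ext_iff (m n : Fin 2 →₀ ℕ) : m = n ↔ m 0 = n 0 ∧ m 1 = n 1 := by
  constructor
  · rintro rfl; exact ⟨rfl, rfl⟩
  · rintro ⟨h0, h1⟩
    ext i
    fin_cases i
    · exact h0
    · exact h1

lemma eq_xE_iff (m : Fin 2 →₀ ℕ) (n : ℕ) : m = xE n ↔ m 0 = n ∧ m 1 = 0 := by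
  rw [eq_ext_iff]; simp

lemma eq_yE_iff (m : Fin 2 →₀ ℕ) (n : ℕ) : m = yE n ↔ m 0 = 0 ∧ m 1 = n := by
  rw [eq_ext_iff]; simp

lemma le_ext_iff (m n : Fin 2 →₀ ℕ) : m ≤ n ↔ m 0 ≤ n 0 ∧ m 1 ≤ n 1 := by
  rw [Finsupp.le_def]
  constructor
  · intro h; exact ⟨h 0, h 1⟩
  · rintro ⟨h0, h1⟩ i
    fin_cases i
    · exact h0
    · exact h1

lemma xE_le_iff (n : ℕ) (m : Fin 2 →₀ ℕ) : xE n ≤ m ↔ n ≤ m 0 := by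
  rw [le_ext_iff]; simp

lemma yE_le_iff (n : ℕ) (m : Fin 2 →₀ ℕ) : yE n ≤ m ↔ n ≤ m 1 := by
  rw [le_ext_iff]; simp

lemma E_le_iff (m : Fin 2 →₀ ℕ) : E ≤ m ↔ 1 ≤ m 0 ∧ 1 ≤ m 1 := by
  rw [le_ext_iff]; simp

variable (k) in
/-- The generator `α x^a + β y^b` upstairs. -/
def gS (α β : k) (a b : ℕ) : MvPowerSeries (Fin 2) k :=
  C (σ := Fin 2) (R := k) α * X 0 ^ a + C (σ := Fin 2) (R := k) β * X 1 ^ b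

variable (k) in
/-- The combined ideal `(xy, α x^a + β y^b)` upstairs. -/
def Jbig (α β : k) (a b : ℕ) : Ideal (MvPowerSeries (Fin 2) k) :=
  Ideal.span {X 0 * X 1, gS k α β a b}

variable (α β : k) (a b : ℕ)

lemma CX_pow_eq (γ : k) (s : Fin 2) (n : ℕ) :
    C (σ := Fin 2) (R := k) γ * X s ^ n = monomial (R := k) (Finsupp.single s n) γ := by
  rw [X_pow_eq, ← monomial_zero_eq_C]
  rw [monomial_mul_monomial, zero_add, mul_one]

lemma XmulX_eq : (X 0 : MvPowerSeries (Fin 2) k) * X 1 = monomial (R := k) E 1 := by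
  rw [X_def, X_def, monomial_mul_monomial, mul_one]
  rfl

lemma gS_eq : gS k α β a b = monomial (R := k) (xE a) α + monomial (R := k) (yE b) β := by
  rw [gS, CX_pow_eq, CX_pow_eq]; rfl

/-- Coefficientwise membership criterion for the ideal `(xy, α x^a + β y^b)`. -/
lemma mem_Jbig_iff (hα : α ≠ 0) (hβ : β ≠ 0) (ha : 1 ≤ a) (hb : 1 ≤ b)
    (f : MvPowerSeries (Fin 2) k) :
    f ∈ Jbig k α β a b ↔
      (∀ i < a, coeff (R := k) (xE i) f = 0) ∧
      (∀ j, 1 ≤ j → j < b → coeff (R := k) (yE j) f = 0) ∧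
      α * coeff (R := k) (yE b) f = β * coeff (R := k) (xE a) f := by
  classical
  constructor
  · intro hf
    rw [Jbig, Ideal.mem_span_pair] at hf
    obtain ⟨u, v, huv⟩ := hf
    have key : ∀ m : Fin 2 →₀ ℕ,
        coeff (R := k) m f =
          (if E ≤ m then coeff (R := k) (m - E) u else 0) +
          ((if xE a ≤ m then coeff (R := k) (m - xE a) v * α else 0) +
           (if yE b ≤ m then coeff (R := k) (m - yE b) v * β else 0)) := by
      intro m
      rw [← huv, map_add, XmulX_eq, gS_eq, mul_add, map_add]
      rw [coeff_mul_monomial, coeff_mul_monomial, coeff_mul_monomial]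
      simp only [mul_one]
    refine ⟨?_, ?_, ?_⟩
    · intro i hi
      rw [key]
      rw [if_neg (by rw [E_le_iff]; simp), if_neg (by rw [xE_le_iff]; simp; omega),
        if_neg (by rw [yE_le_iff]; simp; omega)]
      simp
    · intro j hj1 hjb
      rw [key]
      rw [if_neg (by rw [E_le_iff]; simp), if_neg (by rw [xE_le_iff]; simp; omega),
        if_neg (by rw [yE_le_iff]; simp; omega)]
      simp
    · rw [key (yE b), key (xE a)]
      have hE1 : ¬ E ≤ yE b := by rw [E_le_iff]; simp
      have hE2 : ¬ E ≤ xE a := by rw [E_le_iff]; simp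
      have h4 : ¬ xE a ≤ yE b := by rw [xE_le_iff]; simp; omega
      have h5 : ¬ yE b ≤ xE a := by rw [yE_le_iff]; simp; omega
      rw [if_neg hE1, if_neg hE2, if_neg h4, if_neg h5, if_pos le_rfl, if_pos le_rfl,
        tsub_self, tsub_self]
      ring
  · rintro ⟨h1, h2, h3⟩
    -- membership of x^(a+1) and y^(b+1)
    have hgmem : gS k α β a b ∈ Jbig k α β a b :=
      Ideal.subset_span (by simp)
    have hxymem : (X 0 : MvPowerSeries (Fin 2) k) * X 1 ∈ Jbig k α β a b :=
      Ideal.subset_span (by simp)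
    -- the decomposition
    set c : k := coeff (R := k) (xE a) f / α with hc
    set w₁ : MvPowerSeries (Fin 2) k :=
      (fun m => if m 1 = 0 then coeff (R := k) (m + xE (a + 1)) f else 0 :
        (Fin 2 →₀ ℕ) → k) with hw₁
    set w₂ : MvPowerSeries (Fin 2) k :=
      (fun m => if m 0 = 0 then coeff (R := k) (m + yE (b + 1)) f else 0 :
        (Fin 2 →₀ ℕ) → k) with hw₂
    set h : MvPowerSeries (Fin 2) k :=
      (fun m => coeff (R := k) (m + E) f : (Fin 2 →₀ ℕ) → k) with hh
    have coeff_w₁ : ∀ m, coeff (R := k) m w₁ = if m 1 = 0 then coeff (R := k) (m + xE (a + 1)) f else 0 :=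
      fun m => rfl
    have coeff_w₂ : ∀ m, coeff (R := k) m w₂ = if m 0 = 0 then coeff (R := k) (m + yE (b + 1)) f else 0 :=
      fun m => rfl
    have coeff_h : ∀ m, coeff (R := k) m h = coeff (R := k) (m + E) f := fun m => rfl
    have hdecomp : f = C (σ := Fin 2) (R := k) c * gS k α β a b +
        (monomial (R := k) (xE (a + 1)) 1 * w₁ + (monomial (R := k) (yE (b + 1)) 1 * w₂ +
          monomial (R := k) E 1 * h)) := by
      ext m
      rw [map_add, map_add, map_add]
      rw [coeff_monomial_mul, coeff_monomial_mul, coeff_monomial_mul]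
      simp only [one_mul]
      have hCg : coeff (R := k) m (C (σ := Fin 2) (R := k) c * gS k α β a b) =
          c * ((if m = xE a then α else 0) + (if m = yE b then β else 0)) := by
        rw [← monomial_zero_eq_C, gS_eq, mul_add, map_add, coeff_monomial_mul,
          coeff_monomial_mul, if_pos zero_le, if_pos zero_le, tsub_zero,
          coeff_monomial, coeff_monomial, mul_add]
      rw [hCg]
      by_cases hv : m 1 = 0
      · -- pure x monomial
        have hmx : m = xE (m 0) := by rw [eq_xE_iff]; exact ⟨rfl, hv⟩
        have hmyb : ¬ m = yE b := by rw [eq_yE_iff]; omega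
        have hyble : ¬ yE (b + 1) ≤ m := by rw [yE_le_iff]; omega
        have hEle : ¬ E ≤ m := by rw [E_le_iff]; omega
        rw [if_neg hmyb, if_neg hyble, if_neg hEle]
        rcases lt_trichotomy (m 0) a with hlt | heq | hgt
        · rw [if_neg (show ¬ m = xE a by rw [eq_xE_iff]; omega),
            if_neg (show ¬ xE (a + 1) ≤ m by rw [xE_le_iff]; omega)]
          conv_lhs => rw [hmx]
          rw [h1 (m 0) hlt]
          simp
        · rw [if_pos (show m = xE a by rw [eq_xE_iff]; omega),
            if_neg (show ¬ xE (a + 1) ≤ m by rw [xE_le_iff]; omega)]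
          conv_lhs => rw [hmx, heq]
          simp only [add_zero, zero_add, mul_zero]
          rw [hc]
          field_simp
        · rw [if_neg (show ¬ m = xE a by rw [eq_xE_iff]; omega),
            if_pos (show xE (a + 1) ≤ m by rw [xE_le_iff]; omega)]
          rw [coeff_w₁,
            if_pos (show (m - xE (a + 1)) 1 = 0 by rw [Finsupp.tsub_apply]; simp [hv]),
            tsub_add_cancel_of_le (show xE (a + 1) ≤ m by rw [xE_le_iff]; omega)]
          simp
      · by_cases hu : m 0 = 0
        · -- pure y monomial, m 1 ≥ 1
          have hmy : m = yE (m 1) := by rw [eq_yE_iff]; exact ⟨hu, rfl⟩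
          have hmxa : ¬ m = xE a := by rw [eq_xE_iff]; omega
          have hxale : ¬ xE (a + 1) ≤ m := by rw [xE_le_iff]; omega
          have hEle : ¬ E ≤ m := by rw [E_le_iff]; omega
          rw [if_neg hmxa, if_neg hxale, if_neg hEle]
          rcases lt_trichotomy (m 1) b with hlt | heq | hgt
          · rw [if_neg (show ¬ m = yE b by rw [eq_yE_iff]; omega),
              if_neg (show ¬ yE (b + 1) ≤ m by rw [yE_le_iff]; omega)]
            conv_lhs => rw [hmy]
            rw [h2 (m 1) (by omega) hlt]
            simp
          · rw [if_pos (show m = yE b by rw [eq_yE_iff]; omega),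
              if_neg (show ¬ yE (b + 1) ≤ m by rw [yE_le_iff]; omega)]
            have hybf : coeff (R := k) (yE b) f = β * coeff (R := k) (xE a) f / α := by
              field_simp
              linear_combination h3
            conv_lhs => rw [hmy, heq]
            rw [hybf, hc]
            simp only [zero_add, add_zero, mul_zero]
            field_simp
          · rw [if_neg (show ¬ m = yE b by rw [eq_yE_iff]; omega),
              if_pos (show yE (b + 1) ≤ m by rw [yE_le_iff]; omega)]
            rw [coeff_w₂,
              if_pos (show (m - yE (b + 1)) 0 = 0 by rw [Finsupp.tsub_apply]; simp [hu]),
              tsub_add_cancel_of_le (show yE (b + 1) ≤ m by rw [yE_le_iff]; omega)]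
            simp
        · -- mixed monomial
          have hmxa : ¬ m = xE a := by rw [eq_xE_iff]; omega
          have hmyb : ¬ m = yE b := by rw [eq_yE_iff]; omega
          have hEle : E ≤ m := by rw [E_le_iff]; omega
          rw [if_neg hmxa, if_neg hmyb, if_pos hEle, coeff_h,
            tsub_add_cancel_of_le hEle]
          have t1 : (if xE (a + 1) ≤ m then coeff (R := k) (m - xE (a + 1)) w₁ else 0) = 0 := by
            split_ifs with hle
            · rw [coeff_w₁,
                if_neg (show ¬ (m - xE (a + 1)) 1 = 0 by rw [Finsupp.tsub_apply]; simp; omega)]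
            · rfl
          have t2 : (if yE (b + 1) ≤ m then coeff (R := k) (m - yE (b + 1)) w₂ else 0) = 0 := by
            split_ifs with hle
            · rw [coeff_w₂,
                if_neg (show ¬ (m - yE (b + 1)) 0 = 0 by rw [Finsupp.tsub_apply]; simp; omega)]
            · rfl
          rw [t1, t2]
          simp
    -- memberships of the pieces
    have hXpow : monomial (R := k) (xE (a + 1)) (1 : k) * w₁ ∈ Jbig k α β a b := by
      have e1 : (monomial (R := k) (xE (a + 1)) (1 : k)) =
          C (σ := Fin 2) (R := k) α⁻¹ * X 0 * gS k α β a b -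
            C (σ := Fin 2) (R := k) α⁻¹ * C (σ := Fin 2) (R := k) β * X 1 ^ (b - 1) * (X 0 * X 1) := by
        have hC : C (σ := Fin 2) (R := k) α⁻¹ * C (σ := Fin 2) (R := k) α = 1 := by
          rw [← map_mul, inv_mul_cancel₀ hα, map_one]
        have hXb : (X 1 : MvPowerSeries (Fin 2) k) ^ b = X 1 ^ (b - 1) * X 1 := by
          rw [← pow_succ]; congr 1; omega
        have e2 : (monomial (R := k) (xE (a + 1)) (1 : k)) = X 0 ^ (a + 1) := by
          rw [X_pow_eq]; rfl
        rw [e2, gS, hXb]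
        linear_combination (-(X 0 : MvPowerSeries (Fin 2) k) ^ (a + 1)) * hC
      rw [e1, sub_mul]
      exact Ideal.sub_mem _
        (Ideal.mul_mem_right _ _ (Ideal.mul_mem_left _ _ hgmem))
        (Ideal.mul_mem_right _ _ (Ideal.mul_mem_left _ _ hxymem))
    have hYpow : monomial (R := k) (yE (b + 1)) (1 : k) * w₂ ∈ Jbig k α β a b := by
      have e1 : (monomial (R := k) (yE (b + 1)) (1 : k)) =
          C (σ := Fin 2) (R := k) β⁻¹ * X 1 * gS k α β a b -
            C (σ := Fin 2) (R := k) β⁻¹ * C (σ := Fin 2) (R := k) α * X 0 ^ (a - 1) * (X 0 * X 1) := by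
        have hC : C (σ := Fin 2) (R := k) β⁻¹ * C (σ := Fin 2) (R := k) β = 1 := by
          rw [← map_mul, inv_mul_cancel₀ hβ, map_one]
        have hXa : (X 0 : MvPowerSeries (Fin 2) k) ^ a = X 0 ^ (a - 1) * X 0 := by
          rw [← pow_succ]; congr 1; omega
        have e2 : (monomial (R := k) (yE (b + 1)) (1 : k)) = X 1 ^ (b + 1) := by
          rw [X_pow_eq]; rfl
        rw [e2, gS, hXa]
        linear_combination (-(X 1 : MvPowerSeries (Fin 2) k) ^ (b + 1)) * hC
      rw [e1, sub_mul]
      exact Ideal.sub_mem _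
        (Ideal.mul_mem_right _ _ (Ideal.mul_mem_left _ _ hgmem))
        (Ideal.mul_mem_right _ _ (Ideal.mul_mem_left _ _ hxymem))
    rw [hdecomp]
    exact Ideal.add_mem _ (Ideal.mul_mem_left _ _ hgmem)
      (Ideal.add_mem _ hXpow (Ideal.add_mem _ hYpow
        (Ideal.mul_mem_right _ _ (by rw [← XmulX_eq]; exact hxymem))))

/-- The monomial exponents giving the standard basis of the quotient. -/
def ms (a b : ℕ) : Fin a ⊕ Fin b → (Fin 2 →₀ ℕ) :=
  Sum.elim (fun i => xE (i : ℕ)) (fun j => yE ((j : ℕ) + 1))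

variable (k) in
/-- The k-linear lift map from coordinates to power series. -/
def liftL (a b : ℕ) : ((Fin a ⊕ Fin b) → k) →ₗ[k] MvPowerSeries (Fin 2) k :=
  ∑ s : Fin a ⊕ Fin b, (LinearMap.proj s).smulRight (monomial (R := k) (ms a b s) 1)

lemma ms_injective : Function.Injective (ms a b) := by
  rintro (i | j) (i' | j') h <;> simp only [ms, Sum.elim_inl, Sum.elim_inr] at h
  · have := congrArg (fun m => m 0) h
    simp only [xE_apply0] at this
    exact congrArg Sum.inl (Fin.ext this)
  · have := congrArg (fun m => m 1) h
    simp at this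
  · have := congrArg (fun m => m 1) h
    simp at this
  · have := congrArg (fun m => m 1) h
    simp only [yE_apply1] at this
    exact congrArg Sum.inr (Fin.ext (by omega))

lemma coeff_liftL (c : (Fin a ⊕ Fin b) → k) (t : Fin a ⊕ Fin b) :
    coeff (R := k) (ms a b t) (liftL k a b c) = c t := by
  classical
  rw [liftL, LinearMap.sum_apply, map_sum]
  rw [Finset.sum_eq_single t]
  · simp [coeff_monomial]
  · intro s _ hst
    simp only [LinearMap.smulRight_apply, LinearMap.proj_apply, map_smul, coeff_monomial,
      smul_eq_mul]
    rw [if_neg (fun hh => hst (ms_injective a b hh.symm))]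
    ring
  · intro hs
    exact absurd (Finset.mem_univ t) hs

lemma coeff_liftL_xEa (hb : 1 ≤ a) (c : (Fin a ⊕ Fin b) → k) :
    coeff (R := k) (xE a) (liftL k a b c) = 0 := by
  classical
  rw [liftL, LinearMap.sum_apply, map_sum]
  apply Finset.sum_eq_zero
  rintro (i | j) _ <;>
    simp only [LinearMap.smulRight_apply, LinearMap.proj_apply, map_smul, coeff_monomial,
      smul_eq_mul, ms, Sum.elim_inl, Sum.elim_inr]
  · rw [if_neg, mul_zero]
    intro hh
    have := congrArg (fun m => m 0) hh
    simp only [xE_apply0] at this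
    omega
  · rw [if_neg, mul_zero]
    intro hh
    have := congrArg (fun m => m 0) hh
    simp only [xE_apply0, yE_apply0] at this
    omega

lemma coeff_liftL_xE (i : ℕ) (hi : i < a) (c : (Fin a ⊕ Fin b) → k) :
    coeff (R := k) (xE i) (liftL k a b c) = c (Sum.inl ⟨i, hi⟩) :=
  coeff_liftL a b c (Sum.inl ⟨i, hi⟩)

lemma coeff_liftL_yE (j : ℕ) (hj1 : 1 ≤ j) (hjb : j ≤ b) (c : (Fin a ⊕ Fin b) → k) :
    coeff (R := k) (yE j) (liftL k a b c) = c (Sum.inr ⟨j - 1, by omega⟩) := by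
  have hms : yE j = ms a b (Sum.inr ⟨j - 1, by omega⟩) := by
    simp only [ms, Sum.elim_inr]
    congr 1
    omega
  rw [hms, coeff_liftL]

end

end Stmt13Aux

open Stmt13Aux MvPowerSeries in
/-- in `R = k[[x,y]]/(xy)`, for nonzero `α, β ∈ k` and `a, b ≥ 1`, the principal
ideal `I = (α x^a + β y^b)` contains `x^{a+1}` and `y^{b+1}`, equals the ideal generated by
`α x^a + β y^b, x^{a+1}, y^{b+1}`, and `dim_k R/I = a + b`. -/
theorem stmt_13 (k : Type) [Field k] (α β : k) (hα : α ≠ 0) (hβ : β ≠ 0) (a b : ℕ)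
    (ha : 1 ≤ a) (hb : 1 ≤ b) :
    (nodeX k) ^ (a + 1) ∈
        Ideal.span {algebraMap k (NodeRing k) α * nodeX k ^ a +
          algebraMap k (NodeRing k) β * nodeY k ^ b} ∧
    (nodeY k) ^ (b + 1) ∈
        Ideal.span {algebraMap k (NodeRing k) α * nodeX k ^ a +
          algebraMap k (NodeRing k) β * nodeY k ^ b} ∧
    Ideal.span {algebraMap k (NodeRing k) α * nodeX k ^ a +
          algebraMap k (NodeRing k) β * nodeY k ^ b} =
      Ideal.span {algebraMap k (NodeRing k) α * nodeX k ^ a +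
          algebraMap k (NodeRing k) β * nodeY k ^ b,
        nodeX k ^ (a + 1), nodeY k ^ (b + 1)} ∧
    Module.finrank k (NodeRing k ⧸
        Ideal.span {algebraMap k (NodeRing k) α * nodeX k ^ a +
          algebraMap k (NodeRing k) β * nodeY k ^ b}) = a + b := by
  set Jxy : Ideal (MvPowerSeries (Fin 2) k) :=
    Ideal.span {(MvPowerSeries.X 0 : MvPowerSeries (Fin 2) k) * MvPowerSeries.X 1} with hJxy
  set A : NodeRing k := algebraMap k (NodeRing k) α with hA
  set B : NodeRing k := algebraMap k (NodeRing k) β with hB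
  set x : NodeRing k := nodeX k with hx
  set y : NodeRing k := nodeY k with hy
  set G : NodeRing k := A * x ^ a + B * y ^ b with hG
  have hxy0 : x * y = 0 := by
    rw [hx, hy, nodeX, nodeY, ← map_mul, Ideal.Quotient.eq_zero_iff_mem]
    exact Ideal.subset_span rfl
  -- membership of x^(a+1)
  obtain ⟨a', ha'⟩ : ∃ a', a = a' + 1 := ⟨a - 1, by omega⟩
  obtain ⟨b', hb'⟩ : ∃ b', b = b' + 1 := ⟨b - 1, by omega⟩
  have hxG : x * G = A * x ^ (a + 1) := by
    rw [hG, hb']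
    linear_combination (B * y ^ b') * hxy0
  have hyG : y * G = B * y ^ (b + 1) := by
    rw [hG, ha']
    linear_combination (A * x ^ a') * hxy0
  have hAA : algebraMap k (NodeRing k) α⁻¹ * A = 1 := by
    rw [hA, ← map_mul, inv_mul_cancel₀ hα, map_one]
  have hBB : algebraMap k (NodeRing k) β⁻¹ * B = 1 := by
    rw [hB, ← map_mul, inv_mul_cancel₀ hβ, map_one]
  have hmem1 : x ^ (a + 1) ∈ Ideal.span {G} := by
    have : x ^ (a + 1) = (algebraMap k (NodeRing k) α⁻¹ * x) * G := by
      calc x ^ (a + 1) = (algebraMap k (NodeRing k) α⁻¹ * A) * x ^ (a + 1) := by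
            rw [hAA, one_mul]
        _ = algebraMap k (NodeRing k) α⁻¹ * (A * x ^ (a + 1)) := by ring
        _ = algebraMap k (NodeRing k) α⁻¹ * (x * G) := by rw [hxG]
        _ = (algebraMap k (NodeRing k) α⁻¹ * x) * G := by ring
    rw [this]
    exact Ideal.mul_mem_left _ _ (Ideal.subset_span rfl)
  have hmem2 : y ^ (b + 1) ∈ Ideal.span {G} := by
    have : y ^ (b + 1) = (algebraMap k (NodeRing k) β⁻¹ * y) * G := by
      calc y ^ (b + 1) = (algebraMap k (NodeRing k) β⁻¹ * B) * y ^ (b + 1) := by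
            rw [hBB, one_mul]
        _ = algebraMap k (NodeRing k) β⁻¹ * (B * y ^ (b + 1)) := by ring
        _ = algebraMap k (NodeRing k) β⁻¹ * (y * G) := by rw [hyG]
        _ = (algebraMap k (NodeRing k) β⁻¹ * y) * G := by ring
    rw [this]
    exact Ideal.mul_mem_left _ _ (Ideal.subset_span rfl)
  refine ⟨hmem1, hmem2, ?_, ?_⟩
  · apply le_antisymm
    · exact Ideal.span_mono (by intro r hr; simp_all)
    · rw [Ideal.span_le]
      intro r hr
      simp only [Set.mem_insert_iff, Set.mem_singleton_iff] at hr
      rcases hr with rfl | rfl | rfl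
      · exact Ideal.subset_span rfl
      · exact hmem1
      · exact hmem2
  · -- the dimension count
    classical
    -- identify the quotient with MvPowerSeries / Jbig
    have hGmk : G = Ideal.Quotient.mk Jxy (gS k α β a b) := by
      rw [hG, hA, hB, hx, hy, nodeX, nodeY, gS, map_add, map_mul, map_mul, map_pow, map_pow,
        MvPowerSeries.c_eq_algebraMap (σ := Fin 2) (R := k), Ideal.Quotient.mk_algebraMap,
        Ideal.Quotient.mk_algebraMap]
    have hIdeal : Ideal.span {G} =
        Ideal.map (Ideal.Quotient.mkₐ k Jxy) (Ideal.span {gS k α β a b}) := by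
      rw [Ideal.map_span, Set.image_singleton, hGmk, Ideal.Quotient.mkₐ_eq_mk]
    have e1 : (NodeRing k ⧸ Ideal.span {G}) ≃ₐ[k]
        MvPowerSeries (Fin 2) k ⧸ (Jxy ⊔ Ideal.span {gS k α β a b}) :=
      (Ideal.quotientEquivAlgOfEq k hIdeal).trans
        (DoubleQuot.quotQuotEquivQuotSupₐ k Jxy (Ideal.span {gS k α β a b}))
    have e2 : (MvPowerSeries (Fin 2) k ⧸ (Jxy ⊔ Ideal.span {gS k α β a b})) ≃ₐ[k]
        MvPowerSeries (Fin 2) k ⧸ Jbig k α β a b :=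
      Ideal.quotientEquivAlgOfEq k (by rw [Jbig, Ideal.span_insert])
    -- the quotient by Jbig has dimension a + b
    set J := Jbig k α β a b with hJ
    set Φ : ((Fin a ⊕ Fin b) → k) →ₗ[k] (MvPowerSeries (Fin 2) k ⧸ J) :=
      (Ideal.Quotient.mkₐ k J).toLinearMap.comp (liftL k a b) with hΦ
    have hΦ_apply : ∀ c, Φ c = Ideal.Quotient.mk J (liftL k a b c) := fun c => rfl
    have hΦinj : Function.Injective Φ := by
      rw [← LinearMap.ker_eq_bot, LinearMap.ker_eq_bot']
      intro c hc
      rw [hΦ_apply, Ideal.Quotient.eq_zero_iff_mem, hJ,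
        mem_Jbig_iff α β a b hα hβ ha hb] at hc
      obtain ⟨h1, h2, h3⟩ := hc
      funext t
      rw [Pi.zero_apply]
      rcases t with i | j
      · have := h1 (i : ℕ) i.isLt
        rwa [coeff_liftL_xE a b (i : ℕ) i.isLt] at this
      · by_cases hjb : (j : ℕ) + 1 = b
        · rw [coeff_liftL_xEa a b ha, mul_zero] at h3
          have h4 : coeff (R := k) (yE b) (liftL k a b c) = 0 :=
            (mul_eq_zero.mp h3).resolve_left hα
          rw [coeff_liftL_yE a b b hb le_rfl] at h4
          have : (⟨b - 1, by omega⟩ : Fin b) = j := by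
            apply Fin.ext
            simp only []
            omega
          rwa [this] at h4
        · have := h2 ((j : ℕ) + 1) (by omega) (by omega)
          rw [coeff_liftL_yE a b ((j : ℕ) + 1) (by omega) (by omega)] at this
          have he : (⟨(j : ℕ) + 1 - 1, by omega⟩ : Fin b) = j := by
            apply Fin.ext
            simp only []
            omega
          rwa [he] at this
    have hΦsurj : Function.Surjective Φ := by
      intro z
      obtain ⟨f, rfl⟩ := Ideal.Quotient.mk_surjective z
      set c : (Fin a ⊕ Fin b) → k := fun s =>
        match s with
        | Sum.inl i => coeff (R := k) (xE (i : ℕ)) f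
        | Sum.inr j =>
          if (j : ℕ) + 1 = b then coeff (R := k) (yE b) f - β / α * coeff (R := k) (xE a) f
          else coeff (R := k) (yE ((j : ℕ) + 1)) f with hcdef
      have hcl : ∀ i : Fin a, c (Sum.inl i) = coeff (R := k) (xE (i : ℕ)) f := fun i => rfl
      have hcr : ∀ j : Fin b, c (Sum.inr j) =
          (if (j : ℕ) + 1 = b then coeff (R := k) (yE b) f - β / α * coeff (R := k) (xE a) f
           else coeff (R := k) (yE ((j : ℕ) + 1)) f) := fun j => rfl
      refine ⟨c, ?_⟩
      rw [hΦ_apply, Ideal.Quotient.eq]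
      rw [hJ, mem_Jbig_iff α β a b hα hβ ha hb]
      refine ⟨?_, ?_, ?_⟩
      · intro i hi
        rw [map_sub, coeff_liftL_xE a b i hi, hcl, sub_self]
      · intro j hj1 hjb
        rw [map_sub, coeff_liftL_yE a b j hj1 hjb.le, hcr,
          if_neg (show ¬(j - 1 + 1 = b) by omega)]
        rw [show j - 1 + 1 = j by omega, sub_self]
      · rw [map_sub, map_sub, coeff_liftL_xEa a b ha,
          coeff_liftL_yE a b b hb le_rfl, hcr,
          if_pos (show b - 1 + 1 = b by omega)]
        field_simp
        ring
    have e3 : ((Fin a ⊕ Fin b) → k) ≃ₗ[k] (MvPowerSeries (Fin 2) k ⧸ J) :=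
      LinearEquiv.ofBijective Φ ⟨hΦinj, hΦsurj⟩
    rw [(e1.toLinearEquiv.trans (e2.toLinearEquiv.trans e3.symm)).finrank_eq]
    simp [Module.finrank_pi]
end

section
/- Let k be a field, R = k[[x,y]]/(xy), and let a, b ≥ 1 be integers. Then the ideal I = (x^{a+1}, y^b) of R is not principal: there is no g ∈ R with I = (g). -/
set_option synthInstance.maxHeartbeats 1000000
set_option maxHeartbeats 1000000

/-- Kill all variables except `i` : the ring hom `k[[x₀,x₁]] → k[[X]]` sending `xᵢ ↦ X`,
`x_j ↦ 0` for `j ≠ i`. -/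
noncomputable def projv (k : Type) [Field k] (i : Fin 2) :
    MvPowerSeries (Fin 2) k →+* PowerSeries k where
  toFun f := PowerSeries.mk fun n => MvPowerSeries.coeff (Finsupp.single i n) f
  map_one' := by
    ext n
    simp [MvPowerSeries.coeff_one, PowerSeries.coeff_one, Finsupp.single_eq_zero]
  map_mul' f g := by
    ext n
    rw [PowerSeries.coeff_mul]
    simp only [PowerSeries.coeff_mk, MvPowerSeries.coeff_mul,
      Finsupp.antidiagonal_single, Finset.sum_map]
    rfl
  map_zero' := by ext n; simp
  map_add' f g := by ext n; simp

lemma projv_X_self (k : Type) [Field k] (i : Fin 2) :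
    projv k i (MvPowerSeries.X i) = PowerSeries.X := by
  ext n
  simp only [projv, RingHom.coe_mk, MonoidHom.coe_mk, OneHom.coe_mk, PowerSeries.coeff_mk,
    MvPowerSeries.coeff_X, PowerSeries.coeff_X]
  by_cases h : n = 1
  · simp [h]
  · rw [if_neg h, if_neg]
    intro hs
    exact h (((Finsupp.single_eq_single_iff _ _ _ _).mp hs).elim (fun h => h.2)
      (fun h => absurd h.2 (by norm_num)))

lemma projv_X_ne (k : Type) [Field k] (i j : Fin 2) (hij : i ≠ j) :
    projv k i (MvPowerSeries.X j) = 0 := by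
  ext n
  simp only [projv, RingHom.coe_mk, MonoidHom.coe_mk, OneHom.coe_mk, PowerSeries.coeff_mk,
    MvPowerSeries.coeff_X, map_zero]
  rw [if_neg]
  intro hs
  exact hij (((Finsupp.single_eq_single_iff _ _ _ _).mp hs).elim (fun h => h.1.symm ▸ rfl)
    (fun h => absurd h.2 (by norm_num)))

lemma projv_constantCoeff (k : Type) [Field k] (i : Fin 2)
    (f : MvPowerSeries (Fin 2) k) :
    PowerSeries.constantCoeff (projv k i f) = MvPowerSeries.coeff 0 f := by
  simp only [projv, RingHom.coe_mk, MonoidHom.coe_mk, OneHom.coe_mk]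
  rw [← PowerSeries.coeff_zero_eq_constantCoeff, PowerSeries.coeff_mk, Finsupp.single_zero]

lemma projv_vanish (k : Type) [Field k] (i : Fin 2) :
    ∀ f ∈ Ideal.span {(MvPowerSeries.X 0 : MvPowerSeries (Fin 2) k) * MvPowerSeries.X 1},
      projv k i f = 0 := by
  intro f hf
  obtain ⟨c, rfl⟩ := (Ideal.mem_span_singleton).mp hf
  rw [map_mul, map_mul]
  by_cases h : i = 0
  · subst h; rw [projv_X_ne k 0 1 (by decide)]; ring
  · have h1 : i = 1 := by omega
    subst h1; rw [projv_X_ne k 1 0 (by decide)]; ring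

/-- The induced maps `NodeRing k → k[[X]]`. -/
noncomputable def nodeProj (k : Type) [Field k] (i : Fin 2) :
    NodeRing k →+* PowerSeries k :=
  Ideal.Quotient.lift _ (projv k i) (projv_vanish k i)

/-- in `R = k[[x,y]]/(xy)`, for `a, b ≥ 1` the ideal `(x^{a+1}, y^b)` is not
principal. -/
theorem stmt_14 (k : Type) [Field k] (a b : ℕ) (ha : 1 ≤ a) (hb : 1 ≤ b) :
    ¬ ∃ g : NodeRing k,
        Ideal.span {nodeX k ^ (a + 1), nodeY k ^ b} = Ideal.span {g} := by
  rintro ⟨g, hspan⟩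
  -- g ∈ span pair
  have hg : g ∈ Ideal.span {nodeX k ^ (a + 1), nodeY k ^ b} := by
    rw [hspan]; exact Ideal.mem_span_singleton_self g
  rw [Ideal.mem_span_pair] at hg
  obtain ⟨s, t, hst⟩ := hg
  have hx : nodeX k ^ (a + 1) ∈ Ideal.span {g} := by
    rw [← hspan]; exact Ideal.subset_span (by left; rfl)
  have hy : nodeY k ^ b ∈ Ideal.span {g} := by
    rw [← hspan]; exact Ideal.subset_span (by right; rfl)
  obtain ⟨u, hu⟩ := (Ideal.mem_span_singleton).mp hx
  obtain ⟨v, hv⟩ := (Ideal.mem_span_singleton).mp hy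
  set Φ := nodeProj k 0
  set Ψ := nodeProj k 1
  have hΦX : Φ (nodeX k) = PowerSeries.X := by
    simpa [Φ, nodeProj, nodeX] using projv_X_self k 0
  have hΦY : Φ (nodeY k) = 0 := by
    simpa [Φ, nodeProj, nodeY] using projv_X_ne k 0 1 (by decide)
  have hΨY : Ψ (nodeY k) = PowerSeries.X := by
    simpa [Ψ, nodeProj, nodeY] using projv_X_self k 1
  have hΨX : Ψ (nodeX k) = 0 := by
    simpa [Ψ, nodeProj, nodeX] using projv_X_ne k 1 0 (by decide)
  have hXa : (PowerSeries.X : PowerSeries k) ^ (a + 1) ≠ 0 :=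
    pow_ne_zero _ PowerSeries.X_ne_zero
  have hXb : (PowerSeries.X : PowerSeries k) ^ b ≠ 0 :=
    pow_ne_zero _ PowerSeries.X_ne_zero
  -- apply Φ
  have hΦg : Φ g = Φ s * PowerSeries.X ^ (a + 1) := by
    rw [← hst]; simp [hΦX, hΦY, zero_pow (show b ≠ 0 by omega)]
  have hΦ1 : (PowerSeries.X : PowerSeries k) ^ (a + 1) = Φ s * Φ u * PowerSeries.X ^ (a + 1) := by
    have := congrArg Φ hu
    rw [map_pow, hΦX, map_mul, hΦg] at this
    exact this.trans (by ring)
  have hsu : Φ s * Φ u = 1 := by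
    have h1 : (1 : PowerSeries k) * PowerSeries.X ^ (a + 1)
        = Φ s * Φ u * PowerSeries.X ^ (a + 1) := by rw [one_mul]; exact hΦ1
    exact (mul_right_cancel₀ hXa h1).symm
  -- apply Ψ
  have hΨg : Ψ g = Ψ t * PowerSeries.X ^ b := by
    rw [← hst]
    have hz : Ψ (nodeX k) ^ (a + 1) = 0 := by
      rw [hΨX]; exact zero_pow (Nat.succ_ne_zero a)
    simp [hΨY, hz]
  have htv : Ψ t * Ψ v = 1 := by
    have := congrArg Ψ hv
    rw [map_pow, hΨY, map_mul, hΨg] at this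
    have h1 : (1 : PowerSeries k) * PowerSeries.X ^ b
        = Ψ t * Ψ v * PowerSeries.X ^ b := by rw [one_mul]; exact this.trans (by ring)
    exact (mul_right_cancel₀ hXb h1).symm
  have hΨu : Ψ u = 0 := by
    have h := congrArg Ψ hu
    rw [map_pow, hΨX, map_mul, hΨg, zero_pow (Nat.succ_ne_zero a)] at h
    have ht0 : Ψ t ≠ 0 := left_ne_zero_of_mul_eq_one htv
    rcases mul_eq_zero.mp h.symm with h' | h'
    · rcases mul_eq_zero.mp h' with h'' | h''
      · exact absurd h'' ht0
      · exact absurd h'' hXb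
    · exact h'
  -- constant coefficients
  obtain ⟨U, rfl⟩ := Ideal.Quotient.mk_surjective u
  have hc1 : PowerSeries.constantCoeff (Φ (Ideal.Quotient.mk _ U))
      = MvPowerSeries.coeff 0 U := by
    show PowerSeries.constantCoeff (projv k 0 U) = _
    exact projv_constantCoeff k 0 U
  have hc2 : PowerSeries.constantCoeff (Ψ (Ideal.Quotient.mk _ U))
      = MvPowerSeries.coeff 0 U := by
    show PowerSeries.constantCoeff (projv k 1 U) = _
    exact projv_constantCoeff k 1 U
  have h0 : MvPowerSeries.coeff 0 U = 0 := by rw [← hc2, hΨu, map_zero]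
  have h1 : PowerSeries.constantCoeff (Φ s) * MvPowerSeries.coeff 0 U = 1 := by
    rw [← hc1, ← map_mul, hsu, map_one]
  rw [h0, mul_zero] at h1
  exact zero_ne_one h1
end
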